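/- arXiv:1307.0341 — 7 statements merged into one kernel-verified Lean document; each statement's English description precedes it below -/
import Mathlib

section
/- Let z ∈ ℂ with Re z > 0 and let t₁, t₂, t₃ ∈ [−π, π], where √(1+z) denotes the principal square root. Then |(√(1+z) + e^{i t₃} − 1)(√(1+z) + e^{−i(t₁+t₃)} − 1)| ≤ |(√(1+z) − e^{i t₂} + 1)(√(1+z) − e^{i(t₁−t₂)} + 1)|, and the inequality is an equality if and only if t₁ = t₂ = t₃ = 0. -/
open Complex Real


private lemma le_of_sq_le {a b : ℝ} (h : a^2 ≤ b^2) (hb : 0 < b) : a ≤ b := by nlinarith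

private lemma nonpos_fac {A t : ℝ} (hA : 0 < A) (h : A*t ≤ 0) : t ≤ 0 := by nlinarith

private lemma psi_plus {x y c s u : ℝ} (hxy : 1 + y^2 < x^2) (hx : 0 < x)
    (hcs : c^2 + s^2 = 1) (hu : u^2 ≤ 1) :
    ((x-1)*c - y*s) + u*((x+1)*c + y*s) ≤ 2*x - 1 + u^2 := by
  have hx1 : 1 ≤ x := by nlinarith [sq_nonneg y]
  have hpyth : (((x-1)*c - y*s) + u*((x+1)*c + y*s))^2
        + (s*((x+1)*u+(x-1)) - c*(y*(u-1)))^2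
      = ((x+1)*u+(x-1))^2 + (y*(u-1))^2 := by
    linear_combination (((x+1)*u+(x-1))^2 + (y*(u-1))^2) * hcs
  have hid : (2*x-1+u^2)^2 - ((x+1)*u+(x-1))^2 - (y*(u-1))^2
      = (x^2-1-y^2)*(1-u)^2 + (1-u^2)*((1-u^2)+2*x*(x-1)) := by ring
  have p1 : (0:ℝ) ≤ (x^2-1-y^2)*(1-u)^2 := mul_nonneg (by nlinarith) (sq_nonneg _)
  have p2 : (0:ℝ) ≤ (1-u^2)*((1-u^2)+2*x*(x-1)) :=
    mul_nonneg (by nlinarith) (by nlinarith)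
  have hq2 : (((x-1)*c - y*s) + u*((x+1)*c + y*s))^2 ≤ (2*x-1+u^2)^2 := by
    linarith [hpyth, hid, p1, p2, sq_nonneg (s*((x+1)*u+(x-1)) - c*(y*(u-1)))]
  exact le_of_sq_le hq2 (by nlinarith [sq_nonneg u])

private lemma psi_minus {x y c s u : ℝ} (hxy : 1 + y^2 < x^2) (hx : 0 < x)
    (hcs : c^2 + s^2 = 1) (hu : u^2 ≤ 1) :
    u*((x+1)*c + y*s) - ((x-1)*c - y*s) ≤ 2*x - 1 + u^2 := by
  have hx1 : 1 ≤ x := by nlinarith [sq_nonneg y]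
  have hpyth : (u*((x+1)*c + y*s) - ((x-1)*c - y*s))^2
        + (s*((x+1)*u-(x-1)) - c*(y*(u+1)))^2
      = ((x+1)*u-(x-1))^2 + (y*(u+1))^2 := by
    linear_combination (((x+1)*u-(x-1))^2 + (y*(u+1))^2) * hcs
  have hid : (2*x-1+u^2)^2 - ((x+1)*u-(x-1))^2 - (y*(u+1))^2
      = (x^2-1-y^2)*(1+u)^2 + (1-u^2)*((1-u^2)+2*x*(x-1)) := by ring
  have p1 : (0:ℝ) ≤ (x^2-1-y^2)*(1+u)^2 := mul_nonneg (by nlinarith) (sq_nonneg _)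
  have p2 : (0:ℝ) ≤ (1-u^2)*((1-u^2)+2*x*(x-1)) :=
    mul_nonneg (by nlinarith) (by nlinarith)
  have hq2 : (u*((x+1)*c + y*s) - ((x-1)*c - y*s))^2 ≤ (2*x-1+u^2)^2 := by
    linarith [hpyth, hid, p1, p2, sq_nonneg (s*((x+1)*u-(x-1)) - c*(y*(u+1)))]
  exact le_of_sq_le hq2 (by nlinarith [sq_nonneg u])

private lemma psi_plus_eq {x y c s u : ℝ} (hxy : 1 + y^2 < x^2) (hx : 0 < x)
    (hcs : c^2 + s^2 = 1) (hu : u^2 ≤ 1)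
    (heq : ((x-1)*c - y*s) + u*((x+1)*c + y*s) = 2*x - 1 + u^2) : u = 1 ∧ c = 1 := by
  have hx1 : 1 ≤ x := by nlinarith [sq_nonneg y]
  have hpyth : (((x-1)*c - y*s) + u*((x+1)*c + y*s))^2
        + (s*((x+1)*u+(x-1)) - c*(y*(u-1)))^2
      = ((x+1)*u+(x-1))^2 + (y*(u-1))^2 := by
    linear_combination (((x+1)*u+(x-1))^2 + (y*(u-1))^2) * hcs
  have hq2 : (((x-1)*c - y*s) + u*((x+1)*c + y*s))^2 = (2*x-1+u^2)^2 := by rw [heq]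
  have hsum : (s*((x+1)*u+(x-1)) - c*(y*(u-1)))^2 + (x^2-1-y^2)*(1-u)^2
      + (1-u^2)*((1-u^2)+2*x*(x-1)) = 0 := by
    linear_combination hpyth - hq2
  have p2 : (0:ℝ) ≤ (1-u^2)*((1-u^2)+2*x*(x-1)) :=
    mul_nonneg (by nlinarith) (by nlinarith)
  have h0 : (x^2-1-y^2)*(1-u)^2 ≤ 0 := by
    linarith [hsum, p2, sq_nonneg (s*((x+1)*u+(x-1)) - c*(y*(u-1)))]
  have h0' : (1-u)^2 ≤ 0 := nonpos_fac (by nlinarith : (0:ℝ) < x^2-1-y^2) h0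
  have h1u : (1-u) = 0 := (pow_eq_zero_iff two_ne_zero).mp (le_antisymm h0' (sq_nonneg _))
  have hu1 : u = 1 := by linarith
  subst hu1
  have hcx : 2*x*(c-1) = 0 := by linear_combination heq
  rcases mul_eq_zero.mp hcx with h | h
  · exact absurd h (by positivity)
  · exact ⟨rfl, by linarith⟩

private lemma psi_minus_eq {x y c s u : ℝ} (hxy : 1 + y^2 < x^2) (hx : 0 < x)
    (hc0 : 0 ≤ c) (hcs : c^2 + s^2 = 1) (hu : u^2 ≤ 1)
    (heq : u*((x+1)*c + y*s) - ((x-1)*c - y*s) = 2*x - 1 + u^2) : False := by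
  have hx1 : 1 ≤ x := by nlinarith [sq_nonneg y]
  have hpyth : (u*((x+1)*c + y*s) - ((x-1)*c - y*s))^2
        + (s*((x+1)*u-(x-1)) - c*(y*(u+1)))^2
      = ((x+1)*u-(x-1))^2 + (y*(u+1))^2 := by
    linear_combination (((x+1)*u-(x-1))^2 + (y*(u+1))^2) * hcs
  have hq2 : (u*((x+1)*c + y*s) - ((x-1)*c - y*s))^2 = (2*x-1+u^2)^2 := by rw [heq]
  have hsum : (s*((x+1)*u-(x-1)) - c*(y*(u+1)))^2 + (x^2-1-y^2)*(1+u)^2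
      + (1-u^2)*((1-u^2)+2*x*(x-1)) = 0 := by
    linear_combination hpyth - hq2
  have p2 : (0:ℝ) ≤ (1-u^2)*((1-u^2)+2*x*(x-1)) :=
    mul_nonneg (by nlinarith) (by nlinarith)
  have h0 : (x^2-1-y^2)*(1+u)^2 ≤ 0 := by
    linarith [hsum, p2, sq_nonneg (s*((x+1)*u-(x-1)) - c*(y*(u+1)))]
  have h0' : (1+u)^2 ≤ 0 := nonpos_fac (by nlinarith : (0:ℝ) < x^2-1-y^2) h0
  have h1u : (1+u) = 0 := (pow_eq_zero_iff two_ne_zero).mp (le_antisymm h0' (sq_nonneg _))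
  have hu1 : u = -1 := by linarith
  subst hu1
  have hcx : 2*x*(c+1) = 0 := by linear_combination -heq
  rcases mul_eq_zero.mp hcx with h | h
  · exact absurd h (by positivity)
  · linarith

private lemma I1p (x y c s u v : ℝ) (hcs : c^2+s^2 = 1) (huv : u^2+v^2 = 1) :
    ((x-1+(u*c+v*s))^2 + (y+(v*c-u*s))^2) * ((x-1+(u*c-v*s))^2 + (y-(v*c+u*s))^2)
      = ((x-1+c)^2+(y-s)^2)^2
        - 4*(((x-1)^2+y^2+1)*((x-1)*c-y*s))*(1-u)
        - 4*((x-1)^2+y^2)*(1-u^2) := by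
  linear_combination
    ((-2)*s^2 + (1)*s^4 + (1)*s^4*v^2 + (1)*s^4*u^2 + (-4)*c*s^2*u + (2)*c^2 + (2)*c^2*s^2 + (2)*c^2*s^2*v^2 + (2)*c^2*s^2*u^2 + (-4)*c^3*u + (1)*c^4 + (1)*c^4*v^2 + (1)*c^4*u^2 + (-4)*y*s^3*u + (8)*y*c*s + (-4)*y*c^2*s*u + (2)*y^2*s^2 + (-2)*y^2*c^2 + (4)*x*s^2 + (4)*x*c*s^2*u + (-4)*x*c^2 + (4)*x*c^3*u + (-8)*x*y*c*s + (-2)*x^2*s^2 + (2)*x^2*c^2) * huv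
    + ((-4) + (4)*u^2 + (4)*c + (-4)*c*u + (4)*y*s + (-4)*y*s*u + (-4)*y^2 + (4)*y^2*u^2 + (8)*x + (-8)*x*u^2 + (-4)*x*c + (4)*x*c*u + (-4)*x^2 + (4)*x^2*u^2) * hcs

private lemma I1m (x y c s u v : ℝ) (hcs : c^2+s^2 = 1) (huv : u^2+v^2 = 1) :
    ((x-1+(u*c+v*s))^2 + (y+(v*c-u*s))^2) * ((x-1+(u*c-v*s))^2 + (y-(v*c+u*s))^2)
      = ((x-1-c)^2+(y+s)^2)^2
        + 4*(1+u)*(((x-1)^2+y^2+1)*((x-1)*c-y*s) - ((x-1)^2+y^2)*(1-u)) := by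
  linear_combination
    ((-2)*s^2 + (1)*s^4 + (1)*s^4*v^2 + (1)*s^4*u^2 + (-4)*c*s^2*u + (2)*c^2 + (2)*c^2*s^2 + (2)*c^2*s^2*v^2 + (2)*c^2*s^2*u^2 + (-4)*c^3*u + (1)*c^4 + (1)*c^4*v^2 + (1)*c^4*u^2 + (-4)*y*s^3*u + (8)*y*c*s + (-4)*y*c^2*s*u + (2)*y^2*s^2 + (-2)*y^2*c^2 + (4)*x*s^2 + (4)*x*c*s^2*u + (-4)*x*c^2 + (4)*x*c^3*u + (-8)*x*y*c*s + (-2)*x^2*s^2 + (2)*x^2*c^2) * huv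
    + ((-4) + (4)*u^2 + (-4)*c + (-4)*c*u + (-4)*y*s + (-4)*y*s*u + (-4)*y^2 + (4)*y^2*u^2 + (8)*x + (-8)*x*u^2 + (4)*x*c + (4)*x*c*u + (-4)*x^2 + (4)*x^2*u^2) * hcs

private lemma I2 (x y c s p w : ℝ) (hcs : c^2+s^2 = 1) (hpw : p^2+w^2 = 1) :
    ((x+1-(p*c-w*s))^2 + (y-(w*c+p*s))^2) * ((x+1-(c*p+s*w))^2 + (y-(s*p-c*w))^2)
      = ((x+1)^2+y^2-1+2*p^2-2*p*((x+1)*c+y*s))^2 + 4*w^2*(p-((x+1)*c+y*s))^2 := by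
  linear_combination
    ((-4)*p^2 + (-2)*s^2 + (1)*s^4 + (1)*s^4*w^2 + (1)*s^4*p^2 + (8)*c*p + (-4)*c*s^2*p + (-2)*c^2 + (2)*c^2*s^2 + (2)*c^2*s^2*w^2 + (2)*c^2*s^2*p^2 + (-4)*c^3*p + (1)*c^4 + (1)*c^4*w^2 + (1)*c^4*p^2 + (8)*y*s*p + (-4)*y*s^3*p + (-4)*y*c^2*s*p + (-2)*y^2*s^2 + (-2)*y^2*c^2 + (-4)*x*s^2 + (8)*x*c*p + (-4)*x*c*s^2*p + (-4)*x*c^2 + (-4)*x*c^3*p + (-2)*x^2*s^2 + (-2)*x^2*c^2) * hpw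
    + ((-1) + (4)*p^2 + (1)*s^2 + (-4)*c*p + (1)*c^2 + (-4)*y*s*p + (-2)*y^2 + (4)*y^2*p^2 + (-4)*x + (8)*x*p^2 + (-4)*x*c*p + (-2)*x^2 + (4)*x^2*p^2) * hcs

private lemma QR_p (x y c s p : ℝ) (hcs : c^2+s^2 = 1) :
    ((x+1)^2+y^2-1+2*p^2-2*p*((x+1)*c+y*s)) - ((x-1+c)^2+(y-s)^2)
      = 2*(2*x-1+p^2 - (((x-1)*c-y*s) + p*((x+1)*c+y*s))) := by
  linear_combination (-1) * hcs

private lemma QR_m (x y c s p : ℝ) (hcs : c^2+s^2 = 1) :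
    ((x+1)^2+y^2-1+2*p^2-2*p*((x+1)*c+y*s)) - ((x-1-c)^2+(y+s)^2)
      = 2*(2*x-1+p^2 - (p*((x+1)*c+y*s) - ((x-1)*c-y*s))) := by
  linear_combination (-1) * hcs

private lemma sq_squeeze {Q R ψ : ℝ} (h : R - Q = 2*ψ) (hψ : 0 ≤ ψ) (hQ : 0 ≤ Q)
    (h2 : R^2 ≤ Q^2) : ψ ≤ 0 := by nlinarith

set_option maxHeartbeats 1000000 in
private lemma main_poly {x y c s u v p w : ℝ} (hx : 0 < x) (hxy : 1 + y^2 < x^2)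
    (hc0 : 0 ≤ c) (hcs : c^2+s^2 = 1) (huv : u^2+v^2 = 1) (hpw : p^2+w^2 = 1) :
    ((x-1+(u*c+v*s))^2 + (y+(v*c-u*s))^2) * ((x-1+(u*c-v*s))^2 + (y-(v*c+u*s))^2)
      ≤ ((x+1-(p*c-w*s))^2 + (y-(w*c+p*s))^2) * ((x+1-(c*p+s*w))^2 + (y-(s*p-c*w))^2)
    ∧ (((x-1+(u*c+v*s))^2 + (y+(v*c-u*s))^2) * ((x-1+(u*c-v*s))^2 + (y-(v*c+u*s))^2)
      = ((x+1-(p*c-w*s))^2 + (y-(w*c+p*s))^2) * ((x+1-(c*p+s*w))^2 + (y-(s*p-c*w))^2)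
      → c = 1 ∧ p = 1 ∧ u = 1) := by
  have hx1 : 1 < x := by nlinarith only [sq_nonneg y, hxy, hx]
  have hu2 : u^2 ≤ 1 := by nlinarith only [sq_nonneg v, huv]
  have hp2 : p^2 ≤ 1 := by nlinarith only [sq_nonneg w, hpw]
  have h1u : (0:ℝ) ≤ 1-u := by nlinarith only [hu2]
  have h1pu : (0:ℝ) ≤ 1+u := by nlinarith only [hu2]
  have h1u2 : (0:ℝ) ≤ 1-u^2 := by nlinarith only [hu2]
  have hI1p := I1p x y c s u v hcs huv
  have hI1m := I1m x y c s u v hcs huv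
  have hI2 := I2 x y c s p w hcs hpw
  have hQRp := QR_p x y c s p hcs
  have hQRm := QR_m x y c s p hcs
  have hpsip := psi_plus hxy hx hcs hp2
  have hpsim := psi_minus hxy hx hcs hp2
  have hQp0 : (0:ℝ) ≤ (x-1+c)^2+(y-s)^2 := by positivity
  have hQm0 : (0:ℝ) ≤ (x-1-c)^2+(y+s)^2 := by positivity
  have hRQp : (x-1+c)^2+(y-s)^2 ≤ ((x+1)^2+y^2-1+2*p^2-2*p*((x+1)*c+y*s)) := by
    linarith only [hQRp, hpsip]
  have hRQm : (x-1-c)^2+(y+s)^2 ≤ ((x+1)^2+y^2-1+2*p^2-2*p*((x+1)*c+y*s)) := by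
    linarith only [hQRm, hpsim]
  have hGR : ((x+1)^2+y^2-1+2*p^2-2*p*((x+1)*c+y*s))^2
      ≤ ((x+1-(p*c-w*s))^2 + (y-(w*c+p*s))^2) * ((x+1-(c*p+s*w))^2 + (y-(s*p-c*w))^2) := by
    linarith only [hI2, sq_nonneg (w*(p-((x+1)*c+y*s)))]
  have hsqp : ((x-1+c)^2+(y-s)^2)^2 ≤ ((x+1)^2+y^2-1+2*p^2-2*p*((x+1)*c+y*s))^2 :=
    pow_le_pow_left₀ hQp0 hRQp 2
  have hsqm : ((x-1-c)^2+(y+s)^2)^2 ≤ ((x+1)^2+y^2-1+2*p^2-2*p*((x+1)*c+y*s))^2 :=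
    pow_le_pow_left₀ hQm0 hRQm 2
  have hA0 : (0:ℝ) ≤ (x-1)^2+y^2+1 := by positivity
  have hrho0 : (0:ℝ) ≤ (x-1)^2+y^2 := by positivity
  rcases le_or_gt 0 ((x-1)*c - y*s) with hK | hK
  · have hterm1 : (0:ℝ) ≤ 4*(((x-1)^2+y^2+1)*((x-1)*c-y*s))*(1-u) :=
      mul_nonneg (mul_nonneg (by norm_num) (mul_nonneg hA0 hK)) h1u
    have hterm2 : (0:ℝ) ≤ 4*((x-1)^2+y^2)*(1-u^2) :=
      mul_nonneg (mul_nonneg (by norm_num) hrho0) h1u2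
    have hFQp : ((x-1+(u*c+v*s))^2 + (y+(v*c-u*s))^2) * ((x-1+(u*c-v*s))^2 + (y-(v*c+u*s))^2)
        ≤ ((x-1+c)^2+(y-s)^2)^2 := by linarith only [hI1p, hterm1, hterm2]
    refine ⟨by linarith only [hFQp, hsqp, hGR], fun heq => ?_⟩
    have hR2Q : ((x+1)^2+y^2-1+2*p^2-2*p*((x+1)*c+y*s))^2 ≤ ((x-1+c)^2+(y-s)^2)^2 := by
      linarith only [heq, hGR, hFQp]
    have hψ0 : 2*x-1+p^2 - (((x-1)*c-y*s) + p*((x+1)*c+y*s)) ≤ 0 :=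
      sq_squeeze hQRp (by linarith only [hpsip]) hQp0 hR2Q
    have heqψ : ((x-1)*c-y*s) + p*((x+1)*c+y*s) = 2*x-1+p^2 := by linarith only [hpsip, hψ0]
    obtain ⟨hp1, hc1⟩ := psi_plus_eq hxy hx hcs hp2 heqψ
    have hs0 : s = 0 := by
      have hs2 : s^2 = 0 := by rw [hc1] at hcs; linarith only [hcs]
      exact (pow_eq_zero_iff two_ne_zero).mp hs2
    have hFQ_eq : ((x-1+(u*c+v*s))^2 + (y+(v*c-u*s))^2) * ((x-1+(u*c-v*s))^2 + (y-(v*c+u*s))^2)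
        = ((x-1+c)^2+(y-s)^2)^2 :=
      le_antisymm hFQp (by linarith only [heq, hGR, hsqp])
    have hz : 4*(((x-1)^2+y^2+1)*((x-1)*c-y*s))*(1-u) + 4*((x-1)^2+y^2)*(1-u^2) = 0 := by
      linarith only [hI1p, hFQ_eq]
    have hKval : (x-1)*c - y*s = x-1 := by rw [hc1, hs0]; ring
    rw [hKval] at hz
    have hApos : (0:ℝ) < (((x-1)^2+y^2+1)*(x-1)) :=
      mul_pos (by positivity) (by linarith only [hx1])
    have hzz : (((x-1)^2+y^2+1)*(x-1))*(1-u) ≤ 0 := by linarith only [hz, hterm2]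
    have hule : 1-u ≤ 0 := nonpos_fac hApos hzz
    exact ⟨hc1, hp1, by linarith only [hule, h1u]⟩
  · have hinner : ((x-1)^2+y^2+1)*((x-1)*c-y*s) - ((x-1)^2+y^2)*(1-u) ≤ 0 := by
      have h1 := le_of_lt (mul_neg_of_pos_of_neg (show (0:ℝ) < (x-1)^2+y^2+1 by positivity) hK)
      have h2 := mul_nonneg hrho0 h1u
      linarith only [h1, h2]
    have hterm : 4*(1+u)*(((x-1)^2+y^2+1)*((x-1)*c-y*s) - ((x-1)^2+y^2)*(1-u)) ≤ 0 :=
      mul_nonpos_of_nonneg_of_nonpos (by linarith only [h1pu]) hinner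
    have hFQm : ((x-1+(u*c+v*s))^2 + (y+(v*c-u*s))^2) * ((x-1+(u*c-v*s))^2 + (y-(v*c+u*s))^2)
        ≤ ((x-1-c)^2+(y+s)^2)^2 := by linarith only [hI1m, hterm]
    refine ⟨by linarith only [hFQm, hsqm, hGR], fun heq => ?_⟩
    have hR2Q : ((x+1)^2+y^2-1+2*p^2-2*p*((x+1)*c+y*s))^2 ≤ ((x-1-c)^2+(y+s)^2)^2 := by
      linarith only [heq, hGR, hFQm]
    have hψ0 : 2*x-1+p^2 - (p*((x+1)*c+y*s) - ((x-1)*c-y*s)) ≤ 0 :=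
      sq_squeeze hQRm (by linarith only [hpsim]) hQm0 hR2Q
    have heqψ : p*((x+1)*c+y*s) - ((x-1)*c-y*s) = 2*x-1+p^2 := by
      linarith only [hpsim, hψ0]
    exact (psi_minus_eq hxy hx hc0 hcs hp2 heqψ).elim

private lemma main_real (x y t₁ t₂ t₃ : ℝ) (hx : 0 < x) (hxy : 1 + y^2 < x^2)
    (h1a : -π ≤ t₁) (h1b : t₁ ≤ π) (h2a : -π ≤ t₂) (h2b : t₂ ≤ π)
    (h3a : -π ≤ t₃) (h3b : t₃ ≤ π) :
    ((x-1+Real.cos t₃)^2+(y+Real.sin t₃)^2)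
        * ((x-1+Real.cos (t₁+t₃))^2+(y-Real.sin (t₁+t₃))^2)
      ≤ ((x+1-Real.cos t₂)^2+(y-Real.sin t₂)^2)
        * ((x+1-Real.cos (t₁-t₂))^2+(y-Real.sin (t₁-t₂))^2)
    ∧ (((x-1+Real.cos t₃)^2+(y+Real.sin t₃)^2)
        * ((x-1+Real.cos (t₁+t₃))^2+(y-Real.sin (t₁+t₃))^2)
      = ((x+1-Real.cos t₂)^2+(y-Real.sin t₂)^2)
        * ((x+1-Real.cos (t₁-t₂))^2+(y-Real.sin (t₁-t₂))^2)
      → t₁ = 0 ∧ t₂ = 0 ∧ t₃ = 0) := by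
  have hpi := Real.pi_pos
  have e1 : Real.cos t₃ = Real.cos (t₃+t₁/2)*Real.cos (t₁/2) + Real.sin (t₃+t₁/2)*Real.sin (t₁/2) := by
    have h := Real.cos_sub (t₃+t₁/2) (t₁/2)
    rw [show t₃+t₁/2 - t₁/2 = t₃ from by ring] at h
    exact h
  have e2 : Real.sin t₃ = Real.sin (t₃+t₁/2)*Real.cos (t₁/2) - Real.cos (t₃+t₁/2)*Real.sin (t₁/2) := by
    have h := Real.sin_sub (t₃+t₁/2) (t₁/2)
    rw [show t₃+t₁/2 - t₁/2 = t₃ from by ring] at h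
    exact h
  have e3 : Real.cos (t₁+t₃) = Real.cos (t₃+t₁/2)*Real.cos (t₁/2) - Real.sin (t₃+t₁/2)*Real.sin (t₁/2) := by
    have h := Real.cos_add (t₃+t₁/2) (t₁/2)
    rw [show t₃+t₁/2 + t₁/2 = t₁+t₃ from by ring] at h
    exact h
  have e4 : Real.sin (t₁+t₃) = Real.sin (t₃+t₁/2)*Real.cos (t₁/2) + Real.cos (t₃+t₁/2)*Real.sin (t₁/2) := by
    have h := Real.sin_add (t₃+t₁/2) (t₁/2)
    rw [show t₃+t₁/2 + t₁/2 = t₁+t₃ from by ring] at h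
    exact h
  have e5 : Real.cos t₂ = Real.cos (t₂-t₁/2)*Real.cos (t₁/2) - Real.sin (t₂-t₁/2)*Real.sin (t₁/2) := by
    have h := Real.cos_add (t₂-t₁/2) (t₁/2)
    rw [show t₂-t₁/2 + t₁/2 = t₂ from by ring] at h
    exact h
  have e6 : Real.sin t₂ = Real.sin (t₂-t₁/2)*Real.cos (t₁/2) + Real.cos (t₂-t₁/2)*Real.sin (t₁/2) := by
    have h := Real.sin_add (t₂-t₁/2) (t₁/2)
    rw [show t₂-t₁/2 + t₁/2 = t₂ from by ring] at h
    exact h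
  have e7 : Real.cos (t₁-t₂) = Real.cos (t₁/2)*Real.cos (t₂-t₁/2) + Real.sin (t₁/2)*Real.sin (t₂-t₁/2) := by
    have h := Real.cos_sub (t₁/2) (t₂-t₁/2)
    rw [show t₁/2 - (t₂-t₁/2) = t₁-t₂ from by ring] at h
    exact h
  have e8 : Real.sin (t₁-t₂) = Real.sin (t₁/2)*Real.cos (t₂-t₁/2) - Real.cos (t₁/2)*Real.sin (t₂-t₁/2) := by
    have h := Real.sin_sub (t₁/2) (t₂-t₁/2)
    rw [show t₁/2 - (t₂-t₁/2) = t₁-t₂ from by ring] at h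
    exact h
  rw [e1, e2, e3, e4, e5, e6, e7, e8]
  have hc0 : 0 ≤ Real.cos (t₁/2) :=
    Real.cos_nonneg_of_mem_Icc ⟨by linarith, by linarith⟩
  obtain ⟨hle, himp⟩ := main_poly (c := Real.cos (t₁/2)) (s := Real.sin (t₁/2))
    (u := Real.cos (t₃+t₁/2)) (v := Real.sin (t₃+t₁/2))
    (p := Real.cos (t₂-t₁/2)) (w := Real.sin (t₂-t₁/2))
    hx hxy hc0 (Real.cos_sq_add_sin_sq _) (Real.cos_sq_add_sin_sq _) (Real.cos_sq_add_sin_sq _)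
  refine ⟨hle, fun heq => ?_⟩
  obtain ⟨hc1, hp1, hu1⟩ := himp heq
  have ht1 : t₁ = 0 := by
    have := (Real.cos_eq_one_iff_of_lt_of_lt (x := t₁/2) (by linarith) (by linarith)).mp hc1
    linarith
  have ht2 : t₂ = 0 := by
    rw [ht1] at hp1
    norm_num at hp1
    exact (Real.cos_eq_one_iff_of_lt_of_lt (by linarith) (by linarith)).mp hp1
  have ht3 : t₃ = 0 := by
    rw [ht1] at hu1
    norm_num at hu1
    exact (Real.cos_eq_one_iff_of_lt_of_lt (by linarith) (by linarith)).mp hu1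
  exact ⟨ht1, ht2, ht3⟩

private lemma normSq_aux1 (w : ℂ) (θ : ℝ) :
    Complex.normSq (w + Complex.exp (Complex.I*θ) - 1)
      = (w.re - 1 + Real.cos θ)^2 + (w.im + Real.sin θ)^2 := by
  simp [Complex.normSq_apply, Complex.exp_re, Complex.exp_im, Complex.add_re, Complex.add_im,
    Complex.sub_re, Complex.sub_im, Complex.one_re, Complex.one_im, Complex.mul_re,
    Complex.mul_im, Complex.I_re, Complex.I_im, Complex.ofReal_re, Complex.ofReal_im,
    Real.exp_zero]
  ring

private lemma normSq_aux2 (w : ℂ) (θ : ℝ) :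
    Complex.normSq (w - Complex.exp (Complex.I*θ) + 1)
      = (w.re + 1 - Real.cos θ)^2 + (w.im - Real.sin θ)^2 := by
  simp [Complex.normSq_apply, Complex.exp_re, Complex.exp_im, Complex.add_re, Complex.add_im,
    Complex.sub_re, Complex.sub_im, Complex.one_re, Complex.one_im, Complex.mul_re,
    Complex.mul_im, Complex.I_re, Complex.I_im, Complex.ofReal_re, Complex.ofReal_im,
    Real.exp_zero]
  ring


/-- For `z ∈ ℂ` with `Re z > 0` and `t₁, t₂, t₃ ∈ [−π, π]`, with `√(1+z)` principal,
`|(√(1+z) + e^{it₃} − 1)(√(1+z) + e^{−i(t₁+t₃)} − 1)|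
  ≤ |(√(1+z) − e^{it₂} + 1)(√(1+z) − e^{i(t₁−t₂)} + 1)|`,
with equality if and only if `t₁ = t₂ = t₃ = 0`. -/
theorem stmt_3 (z : ℂ) (hz : 0 < z.re) (t₁ t₂ t₃ : ℝ)
    (h1 : t₁ ∈ Set.Icc (-Real.pi) Real.pi) (h2 : t₂ ∈ Set.Icc (-Real.pi) Real.pi)
    (h3 : t₃ ∈ Set.Icc (-Real.pi) Real.pi) :
    ‖((1 + z) ^ (1/2 : ℂ) + Complex.exp (Complex.I * t₃) - 1) *
        ((1 + z) ^ (1/2 : ℂ) + Complex.exp (-(Complex.I * (t₁ + t₃))) - 1)‖ ≤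
      ‖((1 + z) ^ (1/2 : ℂ) - Complex.exp (Complex.I * t₂) + 1) *
        ((1 + z) ^ (1/2 : ℂ) - Complex.exp (Complex.I * (t₁ - t₂)) + 1)‖ ∧
    (‖((1 + z) ^ (1/2 : ℂ) + Complex.exp (Complex.I * t₃) - 1) *
        ((1 + z) ^ (1/2 : ℂ) + Complex.exp (-(Complex.I * (t₁ + t₃))) - 1)‖ =
      ‖((1 + z) ^ (1/2 : ℂ) - Complex.exp (Complex.I * t₂) + 1) *
        ((1 + z) ^ (1/2 : ℂ) - Complex.exp (Complex.I * (t₁ - t₂)) + 1)‖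
      ↔ t₁ = 0 ∧ t₂ = 0 ∧ t₃ = 0) := by
  set w : ℂ := (1 + z) ^ (1/2 : ℂ) with hwdef
  have hz0 : (1 : ℂ) + z ≠ 0 := by
    intro h
    have := congrArg Complex.re h
    simp at this
    linarith
  have hw2 : w^2 = 1 + z := by
    have h := Complex.cpow_nat_inv_pow (1+z) (n := 2) (by norm_num)
    rw [show (((2:ℕ):ℂ))⁻¹ = (1/2 : ℂ) by norm_num] at h
    exact_mod_cast h
  have hx : 0 < w.re := by
    rw [hwdef, Complex.cpow_def_of_ne_zero hz0, Complex.exp_re]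
    apply mul_pos (Real.exp_pos _)
    apply Real.cos_pos_of_mem_Ioo
    have harg : |Complex.arg (1+z)| < π/2 :=
      Complex.abs_arg_lt_pi_div_two_iff.mpr (Or.inl (by simp; linarith))
    rw [abs_lt] at harg
    have him : (Complex.log (1+z) * (1/2)).im = Complex.arg (1+z) / 2 := by
      simp [Complex.mul_im, Complex.log_im]
      ring
    rw [him]
    have := Real.pi_pos
    constructor
    · linarith [harg.1]
    · linarith [harg.2]
  have hre : w.re^2 - w.im^2 = 1 + z.re := by
    have h := congrArg Complex.re hw2
    rw [pow_two, Complex.mul_re, Complex.add_re, Complex.one_re] at h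
    nlinarith [h]
  have hxy : 1 + w.im^2 < w.re^2 := by nlinarith [hre, hz]
  -- exponent rewrites
  have hfe2 : Complex.exp (-(Complex.I * (↑t₁ + ↑t₃))) = Complex.exp (Complex.I * ((-(t₁+t₃) : ℝ) : ℂ)) := by
    congr 1
    push_cast
    ring
  have hfe4 : Complex.exp (Complex.I * (↑t₁ - ↑t₂)) = Complex.exp (Complex.I * (((t₁-t₂) : ℝ) : ℂ)) := by
    congr 1
    push_cast
    ring
  have hn1 := normSq_aux1 w t₃
  have hn2 : Complex.normSq (w + Complex.exp (-(Complex.I * (↑t₁ + ↑t₃))) - 1)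
      = (w.re - 1 + Real.cos (t₁+t₃))^2 + (w.im - Real.sin (t₁+t₃))^2 := by
    rw [hfe2, normSq_aux1, Real.cos_neg, Real.sin_neg]
    ring
  have hn3 := normSq_aux2 w t₂
  have hn4 : Complex.normSq (w - Complex.exp (Complex.I * (↑t₁ - ↑t₂)) + 1)
      = (w.re + 1 - Real.cos (t₁-t₂))^2 + (w.im - Real.sin (t₁-t₂))^2 := by
    rw [hfe4, normSq_aux2]
  have hL : (‖(w + Complex.exp (Complex.I * t₃) - 1) *
        (w + Complex.exp (-(Complex.I * (t₁ + t₃))) - 1)‖)^2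
      = ((w.re-1+Real.cos t₃)^2+(w.im+Real.sin t₃)^2)
        * ((w.re-1+Real.cos (t₁+t₃))^2+(w.im-Real.sin (t₁+t₃))^2) := by
    rw [norm_mul, mul_pow, Complex.sq_norm, Complex.sq_norm, hn1, hn2]
  have hR : (‖(w - Complex.exp (Complex.I * t₂) + 1) *
        (w - Complex.exp (Complex.I * (t₁ - t₂)) + 1)‖)^2
      = ((w.re+1-Real.cos t₂)^2+(w.im-Real.sin t₂)^2)
        * ((w.re+1-Real.cos (t₁-t₂))^2+(w.im-Real.sin (t₁-t₂))^2) := by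
    rw [norm_mul, mul_pow, Complex.sq_norm, Complex.sq_norm, hn3, hn4]
  obtain ⟨hle, himp⟩ := main_real w.re w.im t₁ t₂ t₃ hx hxy h1.1 h1.2 h2.1 h2.2 h3.1 h3.2
  constructor
  · have h2 : (‖(w + Complex.exp (Complex.I * t₃) - 1) *
        (w + Complex.exp (-(Complex.I * (t₁ + t₃))) - 1)‖)^2
      ≤ (‖(w - Complex.exp (Complex.I * t₂) + 1) *
        (w - Complex.exp (Complex.I * (t₁ - t₂)) + 1)‖)^2 := by
      rw [hL, hR]; exact hle
    have hmono := Real.sqrt_le_sqrt h2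
    rwa [Real.sqrt_sq (norm_nonneg _), Real.sqrt_sq (norm_nonneg _)]
      at hmono
  · constructor
    · intro heq
      apply himp
      have h2 : (‖(w + Complex.exp (Complex.I * t₃) - 1) *
          (w + Complex.exp (-(Complex.I * (t₁ + t₃))) - 1)‖)^2
        = (‖(w - Complex.exp (Complex.I * t₂) + 1) *
          (w - Complex.exp (Complex.I * (t₁ - t₂)) + 1)‖)^2 := by rw [heq]
      rw [hL, hR] at h2
      exact h2
    · rintro ⟨rfl, rfl, rfl⟩
      norm_num
end

section
/- Let z ∈ ℂ with Re z > 0 and let α ∈ [−π, π], where √(1+z) denotes the principal square root. Then the strict inequality |√(1+z) − 1 + e^{−iα}|² < |√(1+z) + 1 + e^{iα}|² holds. -/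
open Complex Real

/-- For `z ∈ ℂ` with `Re z > 0` and `α ∈ [−π, π]`, with `√(1+z)` the principal square root,
the strict inequality `|√(1+z) − 1 + e^{−iα}|² < |√(1+z) + 1 + e^{iα}|²` holds. -/
theorem stmt_6 (z : ℂ) (hz : 0 < z.re) (α : ℝ) (hα : α ∈ Set.Icc (-Real.pi) Real.pi) :
    ‖(1 + z) ^ (1/2 : ℂ) - 1 + Complex.exp (-(Complex.I * α))‖ ^ 2 <
      ‖(1 + z) ^ (1/2 : ℂ) + 1 + Complex.exp (Complex.I * α)‖ ^ 2 := by
  set w : ℂ := (1 + z) ^ (1/2 : ℂ) with hw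
  have hre : (1 + z).re = 1 + z.re := by simp
  have hrepos : 0 < (1 + z).re := by rw [hre]; linarith
  have hne : (1 + z) ≠ 0 := by
    intro h; rw [h] at hrepos; simp at hrepos
  -- w^2 = 1 + z
  have hw2 : w ^ 2 = 1 + z := by
    rw [hw]
    have : (1/2 : ℂ) = ((2 : ℕ) : ℂ)⁻¹ := by norm_num
    rw [this, Complex.cpow_nat_inv_pow _ (by norm_num)]
  -- Re w > 0
  have harg : |(1 + z).arg| < π / 2 :=
    Complex.abs_arg_lt_pi_div_two_iff.2 (Or.inl hrepos)
  have hwre : 0 < w.re := by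
    rw [hw, Complex.cpow_def_of_ne_zero hne, Complex.exp_re]
    apply mul_pos (Real.exp_pos _)
    have him : (Complex.log (1 + z) * (1/2)).im = (1 + z).arg / 2 := by
      simp [Complex.mul_im, Complex.log_im]
      ring
    rw [him]
    apply Real.cos_pos_of_mem_Ioo
    constructor
    · have := abs_lt.1 harg
      linarith [this.1, Real.pi_pos]
    · have := abs_lt.1 harg
      linarith [this.2, Real.pi_pos]
  -- a² - b² = 1 + Re z
  set a := w.re
  set b := w.im
  have hab : a ^ 2 - b ^ 2 = 1 + z.re := by
    have := congrArg Complex.re hw2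
    simp [pow_two, Complex.mul_re] at this
    nlinarith [this]
  -- rewrite exponentials
  have he1 : Complex.exp (-(Complex.I * α)) = Complex.ofReal (Real.cos α) - Complex.ofReal (Real.sin α) * Complex.I := by
    rw [show -(Complex.I * (α:ℂ)) = ((-α : ℝ) : ℂ) * Complex.I by push_cast; ring,
      Complex.exp_mul_I]
    push_cast
    rw [Complex.cos_neg, Complex.sin_neg]
    rw [← Complex.ofReal_cos, ← Complex.ofReal_sin]
    ring
  have he2 : Complex.exp (Complex.I * α) = Complex.ofReal (Real.cos α) + Complex.ofReal (Real.sin α) * Complex.I := by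
    rw [show Complex.I * (α:ℂ) = ((α : ℝ) : ℂ) * Complex.I by push_cast; ring,
      Complex.exp_mul_I, ← Complex.ofReal_cos, ← Complex.ofReal_sin]
  rw [he1, he2, Complex.sq_norm, Complex.sq_norm, Complex.normSq_apply, Complex.normSq_apply]
  set c := Real.cos α
  set s := Real.sin α
  have hcs : c ^ 2 + s ^ 2 = 1 := by
    rw [add_comm]; exact Real.sin_sq_add_cos_sq α
  simp only [Complex.add_re, Complex.add_im, Complex.sub_re, Complex.sub_im,
    Complex.one_re, Complex.one_im, Complex.ofReal_re, Complex.ofReal_im,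
    Complex.mul_re, Complex.mul_im, Complex.I_re, Complex.I_im]
  ring_nf
  nlinarith [sq_nonneg (b * c - s), sq_nonneg (a + c + b * s), hab, hcs, hwre,
    sq_nonneg (a - c - b * s)]
end

section
/- Let z ∈ ℂ with Re z > 0 and α ∈ [−π, π], with √(1+z) the principal square root, and assume |Re{(√(1+z)+1) e^{−iα}}| < 2|√(1+z)+1|² / (1 + |√(1+z)+1|²). Let x* ∈ (0, π) be determined by cos(x*) = ((1 + |√(1+z)+1|²)/(2|√(1+z)+1|²)) · Re{(√(1+z)+1) e^{−iα}}. Then the strict inequality |√(1+z) − 1 + e^{−iα}|² < |√(1+z) + 1 − e^{iα} e^{i x*}| · |√(1+z) + 1 − e^{iα} e^{−i x*}| holds. -/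
lemma aux_D (p q ca sa m : ℝ) (ha : ca^2 + sa^2 = 1) (hm0 : 0 ≤ m)
    (hm2 : m^2 = (p-1)^2+q^2) : (p-1)*ca - q*sa ≤ m := by
  nlinarith [sq_nonneg ((p-1)*sa+q*ca), sq_nonneg (m - ((p-1)*ca - q*sa)), sq_nonneg (m + ((p-1)*ca - q*sa))]

lemma aux_mlt (m p : ℝ) (hm0 : 0 ≤ m) (h : m^2 < 2*p*(p-1)) (hp : 1 < p) : m < 2*p := by
  nlinarith [sq_nonneg (m - 2*p)]

lemma aux_A (m p : ℝ) (hm0 : 0 ≤ m) (h : m^2 < 2*p*(p-1)) (hp : 1 < p) :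
    (m+1)^2*(1+(m^2+4*p)) < ((m^2+4*p)-1)^2 := by
  have hmlt : m < 2*p := aux_mlt m p hm0 h hp
  nlinarith [mul_nonneg (sq_nonneg (m-1)) (by linarith : (0:ℝ) ≤ 2*p - m), h]

lemma aux_fin (X Y r2 L s : ℝ) (hprodm : X*Y*r2^2 = s^2*(r2-1)^2*r2)
    (hs2 : r2*(r2-1)^2 < s^2*(1+r2)^2) (hLA : L*(1+r2) < (r2-1)^2)
    (hL0 : 0 ≤ L) (hr2 : 1 < r2) : L^2 < X*Y := by
  have hr2p : (0:ℝ) < r2 := by linarith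
  have h4 : L^2*(1+r2)^2 < (r2-1)^4 := by
    nlinarith [hLA, hL0, mul_nonneg hL0 (by linarith : (0:ℝ) ≤ 1+r2)]
  have hfin : L^2*(r2^2*(1+r2)^2) < X*Y*(r2^2*(1+r2)^2) := by
    have hr2m1 : (0:ℝ) < (r2-1)^2 := pow_pos (by linarith) 2
    have t1 := mul_lt_mul_of_pos_right hs2 hr2m1
    have u1 := mul_lt_mul_of_pos_left t1 hr2p
    have u2 := mul_lt_mul_of_pos_left h4 (mul_pos hr2p hr2p)
    have u3 : X*Y*(r2^2*(1+r2)^2) = s^2*(1+r2)^2*(r2-1)^2*r2 := by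
      linear_combination (1+r2)^2*hprodm
    nlinarith [u1, u2, u3]
  exact lt_of_mul_lt_mul_right hfin (by positivity)

lemma key_real (p q ca sa cx sx : ℝ) (hp1 : 1 < p) (hpq : 1 < p^2 - q^2)
    (ha : ca^2 + sa^2 = 1) (hx : cx^2 + sx^2 = 1)
    (hcond : |(p+1)*ca + q*sa| < 2*((p+1)^2+q^2)/(1+((p+1)^2+q^2)))
    (hcos : cx = (1+((p+1)^2+q^2))/(2*((p+1)^2+q^2)) * ((p+1)*ca+q*sa)) :
    ((p-1+ca)^2+(q-sa)^2)^2 <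
      ((p+1-(ca*cx-sa*sx))^2+(q-(sa*cx+ca*sx))^2) *
      ((p+1-(ca*cx+sa*sx))^2+(q-(sa*cx-ca*sx))^2) := by
  obtain ⟨r2, hr2d⟩ : ∃ x : ℝ, x = (p+1)^2+q^2 := ⟨_, rfl⟩
  obtain ⟨c, hcd⟩ : ∃ x : ℝ, x = (p+1)*ca+q*sa := ⟨_, rfl⟩
  obtain ⟨s, hsd⟩ : ∃ x : ℝ, x = q*ca-(p+1)*sa := ⟨_, rfl⟩
  rw [← hr2d, ← hcd] at hcond hcos
  have hr2 : 1 < r2 := by rw [hr2d]; nlinarith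
  have hr2p : (0:ℝ) < r2 := by linarith
  have hcs : c^2 + s^2 = r2 := by rw [hcd, hsd, hr2d]; linear_combination ((p+1)^2+q^2) * ha
  have e1 : (p+1-(ca*cx-sa*sx))^2+(q-(sa*cx+ca*sx))^2 = r2+1-2*(c*cx+s*sx) := by
    rw [hcd, hsd, hr2d]; linear_combination (ca^2+sa^2) * hx + ha
  have e2 : (p+1-(ca*cx+sa*sx))^2+(q-(sa*cx-ca*sx))^2 = r2+1-2*(c*cx-s*sx) := by
    rw [hcd, hsd, hr2d]; linear_combination (ca^2+sa^2) * hx + ha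
  rw [e1, e2]
  obtain ⟨L, hLd⟩ : ∃ x : ℝ, x = (p-1+ca)^2+(q-sa)^2 := ⟨_, rfl⟩
  rw [← hLd]
  have hcx : 2*r2*cx = (1+r2)*c := by rw [hcos]; field_simp
  have hprodm : (r2+1-2*(c*cx+s*sx))*(r2+1-2*(c*cx-s*sx))*r2^2 = s^2*(r2-1)^2*r2 := by
    linear_combination (-4*s^2*r2^2)*hx + (2*(c^2+s^2)*cx*r2 + c*(1+r2)*(c^2+s^2-2*r2))*hcx
      + (c^2*(1+r2)^2 - (1+r2)^2*r2)*hcs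
  have hc1 : |c| * (1+r2) < 2*r2 := (lt_div_iff₀ (by linarith)).mp hcond
  have hc2 : c^2 * (1+r2)^2 < 4*r2^2 := by
    have h2 := mul_self_lt_mul_self (by positivity) hc1
    calc c^2*(1+r2)^2 = (|c| * (1+r2))*(|c| * (1+r2)) := by rw [← sq_abs c]; ring
    _ < (2*r2)*(2*r2) := h2
    _ = 4*r2^2 := by ring
  have hs2 : r2*(r2-1)^2 < s^2*(1+r2)^2 := by
    have hsplit : s^2*(1+r2)^2 = r2*(1+r2)^2 - c^2*(1+r2)^2 := by linear_combination (1+r2)^2 * hcs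
    have hexp : r2*(1+r2)^2 - 4*r2^2 = r2*(r2-1)^2 := by ring
    linarith [hc2]
  obtain ⟨m, hm0, hm2⟩ : ∃ m : ℝ, 0 ≤ m ∧ m^2 = (p-1)^2+q^2 :=
    ⟨Real.sqrt ((p-1)^2+q^2), Real.sqrt_nonneg _, Real.sq_sqrt (by positivity)⟩
  have hD : (p-1)*ca - q*sa ≤ m := aux_D p q ca sa m ha hm0 hm2
  have hLid : L = m^2 + 1 + 2*((p-1)*ca - q*sa) := by
    rw [hLd]; linear_combination -hm2 + ha
  have hL : L ≤ (m+1)^2 := by rw [hLid]; linarith [hD]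
  have hL0 : 0 ≤ L := by rw [hLd]; positivity
  have hm2p : m^2 < 2*p*(p-1) := by linarith [hm2, hpq, sq_nonneg q]
  have hr2m : r2 = m^2 + 4*p := by rw [hr2d, hm2]; ring
  have hA : (m+1)^2*(1+r2) < (r2-1)^2 := by
    rw [hr2m]; exact aux_A m p hm0 hm2p hp1
  have hLA : L*(1+r2) < (r2-1)^2 := by
    have h1r2 : (0:ℝ) < 1+r2 := by linarith
    calc L*(1+r2) ≤ (m+1)^2*(1+r2) := by apply mul_le_mul_of_nonneg_right hL (le_of_lt h1r2)
    _ < (r2-1)^2 := hA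
  exact aux_fin _ _ r2 L s hprodm hs2 hLA hL0 hr2
open Complex Real

set_option maxHeartbeats 1000000 in
/-- Under the condition
`|Re{(√(1+z)+1)e^{−iα}}| < 2|√(1+z)+1|²/(1+|√(1+z)+1|²)`, with `x* ∈ (0, π)` determined by
`cos x* = ((1+|√(1+z)+1|²)/(2|√(1+z)+1|²)) Re{(√(1+z)+1)e^{−iα}}`, the strict inequality
`|√(1+z) − 1 + e^{−iα}|² < |√(1+z) + 1 − e^{iα}e^{ix*}| |√(1+z) + 1 − e^{iα}e^{−ix*}|` holds. -/
theorem stmt_7 (z : ℂ) (hz : 0 < z.re) (α : ℝ) (hα : α ∈ Set.Icc (-Real.pi) Real.pi)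
    (hcond : |(((1 + z) ^ (1/2 : ℂ) + 1) * Complex.exp (-(Complex.I * α))).re| <
      2 * ‖(1 + z) ^ (1/2 : ℂ) + 1‖ ^ 2 /
        (1 + ‖(1 + z) ^ (1/2 : ℂ) + 1‖ ^ 2))
    (xs : ℝ) (hxs : xs ∈ Set.Ioo 0 Real.pi)
    (hcos : Real.cos xs = (1 + ‖(1 + z) ^ (1/2 : ℂ) + 1‖ ^ 2) /
        (2 * ‖(1 + z) ^ (1/2 : ℂ) + 1‖ ^ 2) *
        (((1 + z) ^ (1/2 : ℂ) + 1) * Complex.exp (-(Complex.I * α))).re) :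
    ‖(1 + z) ^ (1/2 : ℂ) - 1 + Complex.exp (-(Complex.I * α))‖ ^ 2 <
      ‖(1 + z) ^ (1/2 : ℂ) + 1 - Complex.exp (Complex.I * α) * Complex.exp (Complex.I * xs)‖ *
      ‖(1 + z) ^ (1/2 : ℂ) + 1 - Complex.exp (Complex.I * α) * Complex.exp (-(Complex.I * xs))‖ := by
  have hz1 : (1 + z) ≠ 0 := by
    intro h
    have : (1+z).re = 0 := by rw [h]; simp
    simp only [Complex.add_re, Complex.one_re] at this
    linarith
  obtain ⟨u, hud⟩ : ∃ u : ℂ, u = (1+z) ^ (1/2:ℂ) := ⟨_, rfl⟩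
  rw [← hud] at hcond hcos ⊢
  have hu2 : u ^ 2 = 1 + z := by
    rw [hud]
    have h12 : (1/2 : ℂ) = ((2:ℕ) : ℂ)⁻¹ := by norm_num
    rw [h12]
    exact Complex.cpow_nat_inv_pow (1+z) (by norm_num)
  have hre1z : 0 < (1+z).re := by
    simp only [Complex.add_re, Complex.one_re]; linarith
  have harg : |Complex.arg (1+z)| < Real.pi/2 :=
    Complex.abs_arg_lt_pi_div_two_iff.mpr (Or.inl hre1z)
  have hure : 0 < u.re := by
    rw [hud, Complex.cpow_def_of_ne_zero hz1, Complex.exp_re]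
    apply mul_pos (Real.exp_pos _)
    apply Real.cos_pos_of_mem_Ioo
    have him : (Complex.log (1+z) * (1/2)).im = (1+z).arg * (1/2) := by
      simp [Complex.mul_im, Complex.log_im]
    rw [him]
    obtain ⟨h1, h2⟩ := abs_lt.mp harg
    constructor <;> [nlinarith [Real.pi_pos]; nlinarith [Real.pi_pos]]
  have hpqre : u.re * u.re - u.im * u.im = 1 + z.re := by
    have h := congrArg Complex.re hu2
    rw [pow_two, Complex.mul_re] at h
    simpa using h
  have hpq : 1 < u.re^2 - u.im^2 := by nlinarith [hpqre, hz]
  have hp1 : 1 < u.re := by nlinarith [hure, hpq, sq_nonneg u.im]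
  -- exponentials
  have keyexp : ∀ t : ℝ, Complex.exp (Complex.I * t) = (Real.cos t : ℂ) + (Real.sin t : ℂ) * Complex.I := by
    intro t; rw [mul_comm, Complex.exp_mul_I, Complex.ofReal_cos, Complex.ofReal_sin]
  have keyexp' : ∀ t : ℝ, Complex.exp (-(Complex.I * t)) = (Real.cos t : ℂ) - (Real.sin t : ℂ) * Complex.I := by
    intro t
    have h : -(Complex.I * (t:ℂ)) = Complex.I * ((-t : ℝ) : ℂ) := by push_cast; ring
    rw [h, keyexp (-t), Real.cos_neg, Real.sin_neg]; push_cast; ring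
  -- rewrite hypotheses
  have hre : ((u + 1) * Complex.exp (-(Complex.I * α))).re
      = (u.re+1)*Real.cos α + u.im*Real.sin α := by
    rw [keyexp']
    simp only [Complex.mul_re, Complex.mul_im, Complex.sub_re, Complex.sub_im,
      Complex.add_re, Complex.add_im, Complex.one_re, Complex.one_im,
      Complex.ofReal_re, Complex.ofReal_im, Complex.I_re, Complex.I_im,
      mul_zero, mul_one, zero_mul, sub_zero, zero_sub, add_zero, zero_add]
    ring
  have habs2 : ‖u+1‖ ^ 2 = (u.re+1)^2 + u.im^2 := by
    rw [Complex.sq_norm, Complex.normSq_apply]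
    simp only [Complex.add_re, Complex.add_im, Complex.one_re, Complex.one_im, add_zero]
    ring
  rw [hre, habs2] at hcond hcos
  -- main inequality via key_real
  have ha : Real.cos α ^ 2 + Real.sin α ^ 2 = 1 := Real.cos_sq_add_sin_sq α
  have hx : Real.cos xs ^ 2 + Real.sin xs ^ 2 = 1 := Real.cos_sq_add_sin_sq xs
  have main := key_real u.re u.im (Real.cos α) (Real.sin α) (Real.cos xs) (Real.sin xs)
    hp1 hpq ha hx hcond hcos
  -- reduce goal
  rw [Complex.sq_norm, Complex.norm_def, Complex.norm_def,
    ← Real.sqrt_mul (Complex.normSq_nonneg _)]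
  apply (Real.lt_sqrt (Complex.normSq_nonneg _)).mpr
  simp only [Complex.normSq_apply, keyexp, keyexp', Complex.mul_re, Complex.mul_im,
    Complex.add_re, Complex.add_im, Complex.sub_re, Complex.sub_im, Complex.one_re,
    Complex.one_im, Complex.ofReal_re, Complex.ofReal_im, Complex.I_re, Complex.I_im,
    mul_zero, mul_one, zero_mul, sub_zero, zero_sub, add_zero, zero_add]
  linarith [main]
end

section
/- Let z ∈ ℂ with Re z > 0, where √(1+z) denotes the principal square root. Then (|√(1+z)+1|² − 1)² / (1 + |√(1+z)+1|²) ≥ (1 + |√(1+z) − 1|)², where moreover 1 + |z|/|√(1+z)+1| = 1 + |√(1+z) − 1|. -/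
open Complex Real

lemma aux_ineq (a b t s : ℝ) (ha1 : 1 < a) (hab : 1 < a^2 - b^2)
    (ht0 : 0 ≤ t) (hs0 : 0 ≤ s)
    (ht2 : t^2 = (a-1)^2 + b^2) (hs2 : s^2 = (a+1)^2 + b^2) :
    (1 + t)^2 * (1 + s^2) ≤ (s^2 - 1)^2 := by
  have hlem : ((a-1)^2+b^2)*((a^2+b^2)+2*a+2)^2 ≤ 4*(2*a^2+a*(a^2+b^2)-(a^2+b^2)-1)^2 := by
    nlinarith [sq_nonneg (2*a^2-2*a-1), sq_nonneg b, sq_nonneg (b^2 - Real.sqrt 3/2),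
      mul_pos (sub_pos.2 ha1) (sub_pos.2 hab), sq_nonneg ((a-1)*b),
      sq_nonneg (a^2-b^2-1),
      mul_nonneg (le_of_lt (lt_trans one_pos ha1)) (sq_nonneg (2*a^2-2*a-1)), sq_nonneg (a*b)]
  have hq : (0:ℝ) < (a^2+b^2) + 2*a + 2 := by nlinarith
  have hinner : (0:ℝ) ≤ 2*(2*a^2 + a*(a^2+b^2) - (a^2+b^2) - 1) := by nlinarith
  have key : t * ((a^2+b^2) + 2*a + 2) ≤ 2*(2*a^2 + a*(a^2+b^2) - (a^2+b^2) - 1) := by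
    nlinarith [mul_nonneg ht0 hq.le, hlem, ht2]
  nlinarith [key, ht2, hs2]

/-- For `z ∈ ℂ` with `Re z > 0`, with `√(1+z)` the principal square root,
`(|√(1+z)+1|² − 1)²/(1 + |√(1+z)+1|²) ≥ (1 + |√(1+z) − 1|)²`, and moreover
`1 + |z|/|√(1+z)+1| = 1 + |√(1+z) − 1|`. -/
theorem stmt_8 (z : ℂ) (hz : 0 < z.re) :
    (1 + ‖(1 + z) ^ (1/2 : ℂ) - 1‖) ^ 2 ≤
      (‖(1 + z) ^ (1/2 : ℂ) + 1‖ ^ 2 - 1) ^ 2 /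
        (1 + ‖(1 + z) ^ (1/2 : ℂ) + 1‖ ^ 2) ∧
    1 + ‖z‖ / ‖(1 + z) ^ (1/2 : ℂ) + 1‖ =
      1 + ‖(1 + z) ^ (1/2 : ℂ) - 1‖ := by
  have h1 : (1 + z) ≠ 0 := by
    intro h
    have := congrArg Complex.re h
    simp at this
    linarith
  set w : ℂ := (1 + z) ^ (1/2 : ℂ) with hw
  have hw2 : w ^ 2 = 1 + z := by
    rw [hw, show (1/2 : ℂ) = ((2:ℕ) : ℂ)⁻¹ by norm_num]
    exact Complex.cpow_nat_inv_pow _ (by norm_num)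
  have harg : |Complex.arg (1 + z)| < π/2 := by
    rw [Complex.abs_arg_lt_pi_div_two_iff]
    left; simp; linarith
  have him : ((Complex.log (1+z)) * (1/2)).im = Complex.arg (1+z) / 2 := by
    simp [Complex.mul_im, Complex.log_im]; ring
  have ha : 0 < w.re := by
    rw [hw, Complex.cpow_def_of_ne_zero h1, Complex.exp_re]
    apply mul_pos (Real.exp_pos _)
    apply Real.cos_pos_of_mem_Ioo
    cases' abs_lt.1 harg with hl hr
    constructor <;> rw [him] <;> linarith [Real.pi_pos]
  set a : ℝ := w.re
  set b : ℝ := w.im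
  have hab : 1 < a^2 - b^2 := by
    have := congrArg Complex.re hw2
    rw [Complex.add_re, Complex.one_re] at this
    have h2 : (w^2).re = a^2 - b^2 := by rw [sq, Complex.mul_re]; ring
    rw [h2] at this
    linarith
  have ha1 : 1 < a := by nlinarith [sq_nonneg b]
  set t : ℝ := ‖w - 1‖ with htdef
  set s : ℝ := ‖w + 1‖ with hsdef
  have ht0 : 0 ≤ t := norm_nonneg _
  have hs0 : 0 ≤ s := norm_nonneg _
  have ht2 : t^2 = (a-1)^2 + b^2 := by
    rw [htdef, Complex.sq_norm, Complex.normSq_apply]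
    simp [a, b]
    ring
  have hs2 : s^2 = (a+1)^2 + b^2 := by
    rw [hsdef, Complex.sq_norm, Complex.normSq_apply]
    simp [a, b]
    ring
  have hspos : 0 < s := by nlinarith
  have habs : ‖z‖ = t * s := by
    have hzf : z = (w - 1) * (w + 1) := by linear_combination -hw2
    rw [hzf, norm_mul]
  constructor
  · rw [le_div_iff₀ (by positivity)]
    exact aux_ineq a b t s ha1 hab ht0 hs0 ht2 hs2
  · rw [habs, mul_div_assoc, div_self (ne_of_gt hspos), mul_one]
end

section
/- For every t ≥ √2, the inequality (t(t+√2) − 1)² ≥ (1 + t(t+√2)) · (1 + √(t(t−√2)))² holds, where √ denotes the real (nonnegative) square root. -/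
/-- For every real `t ≥ √2`, the inequality
`(t(t+√2) − 1)² ≥ (1 + t(t+√2)) · (1 + √(t(t−√2)))²` holds. -/
theorem stmt_9 (t : ℝ) (ht : Real.sqrt 2 ≤ t) :
    (1 + t * (t + Real.sqrt 2)) * (1 + Real.sqrt (t * (t - Real.sqrt 2))) ^ 2 ≤
      (t * (t + Real.sqrt 2) - 1) ^ 2 := by
  set u := Real.sqrt 2 with hu
  have hu0 : (0:ℝ) ≤ u := Real.sqrt_nonneg 2
  have hu2 : u ^ 2 = 2 := Real.sq_sqrt (by norm_num)
  have ht0 : 0 ≤ t := le_trans hu0 ht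
  have harg : 0 ≤ t * (t - u) := mul_nonneg ht0 (by linarith)
  set s := Real.sqrt (t * (t - u)) with hsdef
  have hs0 : 0 ≤ s := Real.sqrt_nonneg _
  have hs2 : s ^ 2 = t * (t - u) := Real.sq_sqrt harg
  have ht1 : 1 ≤ t := by nlinarith
  have hid : (u * t * (t ^ 2 - 1)) ^ 2 - (s * (1 + t ^ 2 + u * t)) ^ 2
      = t * (t + u) * (t ^ 2 - u * t - 1) ^ 2 := by
    linear_combination (-(1 + t ^ 2 + u * t) ^ 2) * hs2 + (t ^ 6 + t ^ 2) * hu2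
  have h2 : (s * (1 + t ^ 2 + u * t)) ^ 2 ≤ (u * t * (t ^ 2 - 1)) ^ 2 := by
    nlinarith [mul_nonneg (mul_nonneg ht0 (add_nonneg ht0 hu0))
      (sq_nonneg (t ^ 2 - u * t - 1))]
  have hb : 0 ≤ u * t * (t ^ 2 - 1) :=
    mul_nonneg (mul_nonneg hu0 ht0) (by nlinarith)
  have key : s * (1 + t ^ 2 + u * t) ≤ u * t * (t ^ 2 - 1) := by
    nlinarith [mul_nonneg hs0 (by nlinarith : (0:ℝ) ≤ 1 + t ^ 2 + u * t)]
  nlinarith [key]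
end

section
/- Let z ∈ ℂ \ (−∞,0] and set a(z) = √(z+√z) − √z and b(z) = √(z+√z) + √z with principal square roots. Then for every positive integer n the Apéry polynomial admits the integral representation B_n(z) = (2π)^{-3} ∫_{[−π,π]³} {((1 + b(z)e^{i t₃})(1 + b(z)e^{−i(t₁+t₃)})) / ((1 − a(z)e^{i t₂})(1 − a(z)e^{i(t₁−t₂)}))}^n · ((1 − a(z)e^{i t₂})(1 − a(z)e^{i(t₁−t₂)}))^{-1} d(t₁,t₂,t₃). -/
set_option maxHeartbeats 1000000

open Complex MeasureTheory Finset


lemma sqrt_sq' {w : ℂ} : (w ^ (1/2:ℂ)) ^ 2 = w := by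
  rw [one_div]; exact cpow_nat_inv_pow w two_ne_zero

lemma re_sqrt_pos {w : ℂ} (hw : 0 < w.re ∨ w.im ≠ 0) : 0 < (w ^ (1/2:ℂ)).re := by
  have hw0 : w ≠ 0 := by rintro rfl; simp at hw
  rw [cpow_def_of_ne_zero hw0, exp_re]
  apply mul_pos (Real.exp_pos _)
  apply Real.cos_pos_of_mem_Ioo
  have h1 : (Complex.log w * (1/2)).im = w.arg / 2 := by simp [Complex.log_im]; ring
  rw [h1]
  have h2 := Complex.neg_pi_lt_arg w
  have h3 : w.arg < Real.pi := by
    rcases lt_or_eq_of_le (Complex.arg_le_pi w) with h | h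
    · exact h
    · exfalso
      rw [Complex.arg_eq_pi_iff] at h
      rcases hw with h' | h'
      · linarith [h.1]
      · exact h' h.2
  constructor
  · show -(Real.pi/2) < _; linarith
  · show _ < Real.pi/2; linarith

lemma key_facts {z : ℂ} (hz : ∀ x : ℝ, x ≤ 0 → z ≠ (x : ℂ)) :
    ‖(z + z ^ (1/2:ℂ)) ^ (1/2:ℂ) - z ^ (1/2:ℂ)‖ < 1 ∧
    ((z + z ^ (1/2:ℂ)) ^ (1/2:ℂ) - z ^ (1/2:ℂ)) *
      ((z + z ^ (1/2:ℂ)) ^ (1/2:ℂ) + z ^ (1/2:ℂ)) = z ^ (1/2:ℂ) := by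
  set s := z ^ (1/2:ℂ) with hs
  have hzslit : 0 < z.re ∨ z.im ≠ 0 := by
    by_contra h
    push_neg at h
    exact hz z.re (h.1) (by rw [Complex.ext_iff]; simp [h.2])
  have hsre : 0 < s.re := re_sqrt_pos hzslit
  have hs2 : s ^ 2 = z := sqrt_sq'
  have him : z.im = 2 * s.re * s.im := by
    rw [← hs2]; simp [sq, Complex.mul_im]; ring
  have hre : z.re = s.re * s.re - s.im * s.im := by
    rw [← hs2]; simp [sq, Complex.mul_re]
  have hwslit : 0 < (z + s).re ∨ (z + s).im ≠ 0 := by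
    rcases eq_or_ne s.im 0 with h0 | h0
    · left
      simp only [Complex.add_re]
      have : 0 < z.re := by
        rcases hzslit with h | h
        · exact h
        · exact absurd (by rw [him, h0]; ring) h
      linarith
    · right
      simp only [Complex.add_im]
      rw [him]
      intro hc
      have : s.im * (2 * s.re + 1) = 0 := by linarith
      rcases mul_eq_zero.1 this with h | h
      · exact h0 h
      · nlinarith
  set u := (z + s) ^ (1/2:ℂ) with hu
  have hure : 0 < u.re := re_sqrt_pos hwslit
  have hu2 : u ^ 2 = z + s := sqrt_sq'
  have huim : z.im + s.im = 2 * u.re * u.im := by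
    have : (z+s).im = 2*u.re*u.im := by rw [← hu2]; simp [sq, Complex.mul_im]; ring
    simpa using this
  have hab : (u - s) * (u + s) = s := by
    have : u^2 - s^2 = s := by rw [hu2, hs2]; ring
    linear_combination this
  refine ⟨?_, hab⟩
  have hkey : 2 * u.re * u.im = s.im * (2 * s.re + 1) := by
    rw [him] at huim; linarith
  have h5 : 0 ≤ u.im * s.im := by
    have h6 : u.im * s.im = s.im ^ 2 * (2 * s.re + 1) / (2 * u.re) := by
      field_simp
      linear_combination s.im * hkey
    rw [h6]; positivity
  have hlt : Complex.normSq s < Complex.normSq (u + s) := by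
    simp only [Complex.normSq_apply, Complex.add_re, Complex.add_im]
    nlinarith [mul_pos hure hsre, h5, sq_nonneg u.im, mul_pos hure hure]
  have hbne : u + s ≠ 0 := by
    intro h
    rw [h] at hlt
    simp only [Complex.normSq_zero] at hlt
    exact absurd hlt (not_lt.2 (Complex.normSq_nonneg s))
  have ha : u - s = s / (u + s) := by
    field_simp
    linear_combination hab
  rw [ha, norm_div]
  rw [div_lt_one (norm_pos_iff.2 hbne)]
  simp only [Complex.norm_def]
  exact Real.sqrt_lt_sqrt (Complex.normSq_nonneg _) hlt

lemma orth (m : ℤ) : ∫ t in Set.Icc (-Real.pi) Real.pi, Complex.exp (m * Complex.I * t)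
    = if m = 0 then (2 * Real.pi : ℂ) else 0 := by
  have hle : (-Real.pi : ℝ) ≤ Real.pi := by linarith [Real.pi_pos]
  rw [MeasureTheory.integral_Icc_eq_integral_Ioc,
    ← intervalIntegral.integral_of_le hle]
  rcases eq_or_ne m 0 with rfl | hm
  · simp
    norm_num
    push_cast
    ring
  · rw [if_neg hm]
    have hc : (m : ℂ) * Complex.I ≠ 0 := by
      simp [Complex.I_ne_zero, hm]
    rw [integral_exp_mul_complex hc]
    have h1 : (m:ℂ) * I * (Real.pi:ℂ) = m * (Real.pi * I) := by ring
    have h2 : (m:ℂ) * I * ((-Real.pi:ℝ):ℂ) = ((-m : ℤ) : ℂ) * (Real.pi * I) := by push_cast; ring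
    rw [h1, h2, Complex.exp_int_mul, Complex.exp_int_mul, Complex.exp_pi_mul_I]
    simp only [div_eq_zero_iff]
    left
    rcases Int.even_or_odd m with h | h
    · simp [h.neg_one_zpow]
    · simp [h.neg_one_zpow]

lemma binom (w : ℂ) (n : ℕ) :
    (1 + w) ^ n = ∑ j ∈ Finset.range (n + 1), (n.choose j : ℂ) * w ^ j := by
  rw [add_comm, add_pow]
  exact Finset.sum_congr rfl fun j _ => by ring

lemma intOn (c w : ℂ) :
    MeasureTheory.IntegrableOn (fun t : ℝ => c * Complex.exp (w * t))
      (Set.Icc (-Real.pi) Real.pi) := by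
  apply Continuous.integrableOn_Icc
  fun_prop

lemma step3 (b : ℂ) (n : ℕ) (t1 : ℝ) :
    (∫ t3 in Set.Icc (-Real.pi) Real.pi,
      (1 + b * Complex.exp (Complex.I * t3)) ^ n *
        (1 + b * Complex.exp (-(Complex.I * ((t1 : ℂ) + (t3 : ℂ))))) ^ n)
    = (2 * Real.pi : ℂ) * ∑ k ∈ Finset.range (n + 1),
        (n.choose k : ℂ) ^ 2 * b ^ (2 * k) * Complex.exp (-(Complex.I * k * t1)) := by
  have expand : ∀ t3 : ℝ,
      (1 + b * Complex.exp (Complex.I * t3)) ^ n *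
        (1 + b * Complex.exp (-(Complex.I * ((t1 : ℂ) + (t3 : ℂ))))) ^ n
      = ∑ jk ∈ Finset.range (n+1) ×ˢ Finset.range (n+1),
          ((n.choose jk.1 : ℂ) * (n.choose jk.2 : ℂ) * b ^ (jk.1 + jk.2) *
            Complex.exp (-(Complex.I * jk.2 * t1))) *
          Complex.exp ((((jk.1 : ℤ) - (jk.2 : ℤ) : ℤ) : ℂ) * Complex.I * t3) := by
    intro t3
    rw [binom, binom, Finset.sum_mul_sum, ← Finset.sum_product']
    refine Finset.sum_congr rfl fun jk _ => ?_
    obtain ⟨j, k⟩ := jk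
    calc (n.choose j : ℂ) * (b * Complex.exp (Complex.I * t3)) ^ j *
          ((n.choose k : ℂ) * (b * Complex.exp (-(Complex.I * ((t1:ℂ) + t3)))) ^ k)
        = (n.choose j : ℂ) * (n.choose k : ℂ) * b ^ (j + k) *
            (Complex.exp (Complex.I * t3) ^ j *
              Complex.exp (-(Complex.I * ((t1:ℂ) + t3))) ^ k) := by ring
      _ = (n.choose j : ℂ) * (n.choose k : ℂ) * b ^ (j + k) *
            Complex.exp ((j : ℂ) * (Complex.I * t3) +
              (k : ℂ) * -(Complex.I * ((t1:ℂ) + t3))) := by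
          rw [← Complex.exp_nat_mul, ← Complex.exp_nat_mul, ← Complex.exp_add]
      _ = _ := by
          rw [show (j : ℂ) * (Complex.I * t3) + (k : ℂ) * -(Complex.I * ((t1:ℂ) + t3))
              = -(Complex.I * k * t1) + (((j:ℂ) - (k:ℂ)) * Complex.I * t3) by ring,
            Complex.exp_add]
          push_cast
          ring
  simp only [expand]
  rw [MeasureTheory.integral_finset_sum _ (fun jk _ => intOn _ _)]
  have hterm : ∀ jk ∈ Finset.range (n+1) ×ˢ Finset.range (n+1),
      (∫ t3 in Set.Icc (-Real.pi) Real.pi,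
        ((n.choose jk.1 : ℂ) * (n.choose jk.2 : ℂ) * b ^ (jk.1 + jk.2) *
          Complex.exp (-(Complex.I * jk.2 * t1))) *
          Complex.exp ((((jk.1 : ℤ) - (jk.2 : ℤ) : ℤ) : ℂ) * Complex.I * t3))
      = if jk.2 = jk.1 then ((n.choose jk.1 : ℂ) * (n.choose jk.2 : ℂ) * b ^ (jk.1 + jk.2) *
          Complex.exp (-(Complex.I * jk.2 * t1))) * (2 * Real.pi) else 0 := by
    intro jk _
    rw [MeasureTheory.integral_const_mul, orth]
    rcases eq_or_ne jk.2 jk.1 with h | h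
    · rw [if_pos h, if_pos (by omega)]
    · rw [if_neg (by omega), if_neg h, mul_zero]
  rw [Finset.sum_congr rfl hterm, Finset.sum_product, Finset.mul_sum]
  refine Finset.sum_congr rfl fun j hj => ?_
  simp only
  rw [Finset.sum_ite_eq' (Finset.range (n+1)) j, if_pos hj]
  rw [two_mul]
  ring

lemma norm_aexp (a : ℂ) (r : ℝ) : ‖a * Complex.exp (Complex.I * r)‖ = ‖a‖ := by
  rw [norm_mul, Complex.norm_exp]
  simp [Complex.mul_re]

lemma step2 {a : ℂ} (haa : ‖a‖ < 1) (n : ℕ) (t1 : ℝ) :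
    (∫ t2 in Set.Icc (-Real.pi) Real.pi,
      (((1 - a * Complex.exp (Complex.I * t2)) *
        (1 - a * Complex.exp (Complex.I * ((t1:ℂ) - (t2:ℂ))))) ^ (n+1))⁻¹)
    = (2 * Real.pi : ℂ) * ∑' p : ℕ,
        ((p + n).choose n : ℂ) ^ 2 * a ^ (2 * p) * Complex.exp (Complex.I * p * t1) := by
  have h2pi : (0:ℝ) ≤ 2 * Real.pi := by positivity
  -- norm facts
  have hw1 : ∀ t2 : ℝ, ‖a * Complex.exp (Complex.I * t2)‖ < 1 := fun t2 => by
    rw [norm_aexp]; exact haa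
  have hw2 : ∀ t2 : ℝ, ‖a * Complex.exp (Complex.I * ((t1:ℂ) - (t2:ℂ)))‖ < 1 := fun t2 => by
    have : ((t1:ℂ) - (t2:ℂ)) = ((t1 - t2 : ℝ) : ℂ) := by push_cast; ring
    rw [this, norm_aexp]; exact haa
  -- real summability
  have Sreal : Summable (fun p : ℕ => ((p + n).choose n : ℝ) * ‖a‖ ^ p) := by
    have := summable_choose_mul_geometric_of_norm_lt_one (R := ℝ) n
      (r := ‖a‖) (by simpa using haa)
    simpa using this
  have hnorm : ∀ (w : ℂ), ‖w‖ < 1 → ‖w‖ = ‖a‖ →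
      (fun p : ℕ => ‖((p + n).choose n : ℂ) * w ^ p‖)
        = fun p : ℕ => ((p + n).choose n : ℝ) * ‖a‖ ^ p := by
    intro w hw hwa
    funext p
    rw [norm_mul, norm_pow, hwa, Complex.norm_natCast]
  -- pointwise expansion
  have pointwise : ∀ t2 : ℝ,
      (((1 - a * Complex.exp (Complex.I * t2)) *
        (1 - a * Complex.exp (Complex.I * ((t1:ℂ) - (t2:ℂ))))) ^ (n+1))⁻¹
      = ∑' pq : ℕ × ℕ,
          (((pq.1 + n).choose n : ℂ) * ((pq.2 + n).choose n : ℂ) * a ^ (pq.1 + pq.2) *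
            Complex.exp (Complex.I * pq.2 * t1)) *
          Complex.exp ((((pq.1 : ℤ) - (pq.2 : ℤ) : ℤ) : ℂ) * Complex.I * t2) := by
    intro t2
    set w1 := a * Complex.exp (Complex.I * t2) with hw1def
    set w2 := a * Complex.exp (Complex.I * ((t1:ℂ) - (t2:ℂ))) with hw2def
    have h1 := hasSum_choose_mul_geometric_of_norm_lt_one (𝕜 := ℂ) n (hw1 t2)
    have h2 := hasSum_choose_mul_geometric_of_norm_lt_one (𝕜 := ℂ) n (hw2 t2)
    have hn1 : Summable (fun p : ℕ => ‖((p + n).choose n : ℂ) * w1 ^ p‖) := by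
      rw [hnorm w1 (hw1 t2) (norm_aexp a t2)]; exact Sreal
    have hn2 : Summable (fun q : ℕ => ‖((q + n).choose n : ℂ) * w2 ^ q‖) := by
      rw [hnorm w2 (hw2 t2) (by
          have h9 : ((t1:ℂ) - (t2:ℂ)) = ((t1 - t2 : ℝ) : ℂ) := by push_cast; ring
          rw [hw2def, h9]; exact norm_aexp a (t1 - t2))]
      exact Sreal
    have hs : Summable (fun pq : ℕ × ℕ =>
        (((pq.1 + n).choose n : ℂ) * w1 ^ pq.1) * (((pq.2 + n).choose n : ℂ) * w2 ^ pq.2)) := by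
      apply Summable.of_norm
      apply Summable.congr (hn1.mul_of_nonneg hn2 (fun p => norm_nonneg _)
        (fun q => norm_nonneg _))
      intro pq
      simp [norm_mul]
    have hmul := h1.mul h2 hs
    have hval : (((1 - w1) * (1 - w2)) ^ (n+1))⁻¹
        = (1 / (1 - w1) ^ (n+1)) * (1 / (1 - w2) ^ (n+1)) := by
      rw [mul_pow, mul_inv, one_div, one_div]
    rw [hval, ← hmul.tsum_eq]
    apply tsum_congr
    intro pq
    obtain ⟨p, q⟩ := pq
    calc ((p + n).choose n : ℂ) * w1 ^ p * (((q + n).choose n : ℂ) * w2 ^ q)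
        = ((p + n).choose n : ℂ) * ((q + n).choose n : ℂ) * a ^ (p + q) *
            (Complex.exp (Complex.I * t2) ^ p *
              Complex.exp (Complex.I * ((t1:ℂ) - (t2:ℂ))) ^ q) := by
          rw [hw1def, hw2def]; ring
      _ = ((p + n).choose n : ℂ) * ((q + n).choose n : ℂ) * a ^ (p + q) *
            Complex.exp ((p : ℂ) * (Complex.I * t2) +
              (q : ℂ) * (Complex.I * ((t1:ℂ) - (t2:ℂ)))) := by
          rw [← Complex.exp_nat_mul, ← Complex.exp_nat_mul, ← Complex.exp_add]
      _ = _ := by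
          rw [show (p : ℂ) * (Complex.I * t2) + (q : ℂ) * (Complex.I * ((t1:ℂ) - (t2:ℂ)))
              = Complex.I * q * t1 + (((p:ℂ) - (q:ℂ)) * Complex.I * t2) by ring,
            Complex.exp_add]
          push_cast
          ring
  simp only [pointwise]
  -- swap integral and tsum
  have hInt : ∀ pq : ℕ × ℕ, Integrable (fun t2 : ℝ =>
      (((pq.1 + n).choose n : ℂ) * ((pq.2 + n).choose n : ℂ) * a ^ (pq.1 + pq.2) *
        Complex.exp (Complex.I * pq.2 * t1)) *
      Complex.exp ((((pq.1 : ℤ) - (pq.2 : ℤ) : ℤ) : ℂ) * Complex.I * t2))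
      (volume.restrict (Set.Icc (-Real.pi) Real.pi)) := by
    intro pq
    have := intOn (((pq.1 + n).choose n : ℂ) * ((pq.2 + n).choose n : ℂ) * a ^ (pq.1 + pq.2) *
        Complex.exp (Complex.I * pq.2 * t1)) ((((pq.1 : ℤ) - (pq.2 : ℤ) : ℤ) : ℂ) * Complex.I)
    simpa [mul_assoc] using this.integrable
  have hnormc : ∀ (pq : ℕ × ℕ) (t2 : ℝ),
      ‖(((pq.1 + n).choose n : ℂ) * ((pq.2 + n).choose n : ℂ) * a ^ (pq.1 + pq.2) *
        Complex.exp (Complex.I * pq.2 * t1)) *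
        Complex.exp ((((pq.1 : ℤ) - (pq.2 : ℤ) : ℤ) : ℂ) * Complex.I * t2)‖
      = (((pq.1 + n).choose n : ℝ) * ‖a‖ ^ pq.1) * (((pq.2 + n).choose n : ℝ) * ‖a‖ ^ pq.2) := by
    intro pq t2
    have e1 : ‖Complex.exp (Complex.I * pq.2 * t1)‖ = 1 := by
      rw [Complex.norm_exp]; simp [Complex.mul_re, Complex.mul_im]
    have e2 : ‖Complex.exp ((((pq.1 : ℤ) - (pq.2 : ℤ) : ℤ) : ℂ) * Complex.I * t2)‖ = 1 := by
      rw [Complex.norm_exp]; simp [Complex.mul_re, Complex.mul_im]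
    rw [norm_mul, norm_mul, norm_mul, norm_mul, e1, e2, norm_pow,
      Complex.norm_natCast, Complex.norm_natCast, pow_add]
    ring
  have hSumK : Summable (fun pq : ℕ × ℕ =>
      ((((pq.1 + n).choose n : ℝ) * ‖a‖ ^ pq.1) * (((pq.2 + n).choose n : ℝ) * ‖a‖ ^ pq.2))) :=
    Sreal.mul_of_nonneg Sreal (fun p => by positivity) (fun q => by positivity)
  have hSum : Summable (fun pq : ℕ × ℕ => ∫ t2 in Set.Icc (-Real.pi) Real.pi,
      ‖(((pq.1 + n).choose n : ℂ) * ((pq.2 + n).choose n : ℂ) * a ^ (pq.1 + pq.2) *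
        Complex.exp (Complex.I * pq.2 * t1)) *
        Complex.exp ((((pq.1 : ℤ) - (pq.2 : ℤ) : ℤ) : ℂ) * Complex.I * t2)‖) := by
    apply Summable.congr (hSumK.mul_right (2 * Real.pi))
    intro pq
    rw [show (∫ t2 in Set.Icc (-Real.pi) Real.pi,
      ‖(((pq.1 + n).choose n : ℂ) * ((pq.2 + n).choose n : ℂ) * a ^ (pq.1 + pq.2) *
        Complex.exp (Complex.I * pq.2 * t1)) *
        Complex.exp ((((pq.1 : ℤ) - (pq.2 : ℤ) : ℤ) : ℂ) * Complex.I * t2)‖)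
      = ∫ t2 in Set.Icc (-Real.pi) Real.pi,
        ((((pq.1 + n).choose n : ℝ) * ‖a‖ ^ pq.1) * (((pq.2 + n).choose n : ℝ) * ‖a‖ ^ pq.2))
      from by congr 1; funext t2; exact hnormc pq t2]
    rw [MeasureTheory.setIntegral_const, Real.volume_real_Icc, smul_eq_mul]
    rw [max_eq_left (by linarith)]
    ring
  rw [← MeasureTheory.integral_tsum_of_summable_integral_norm hInt hSum]
  -- termwise evaluation
  have hterm : ∀ pq : ℕ × ℕ,
      (∫ t2 in Set.Icc (-Real.pi) Real.pi,
        (((pq.1 + n).choose n : ℂ) * ((pq.2 + n).choose n : ℂ) * a ^ (pq.1 + pq.2) *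
          Complex.exp (Complex.I * pq.2 * t1)) *
        Complex.exp ((((pq.1 : ℤ) - (pq.2 : ℤ) : ℤ) : ℂ) * Complex.I * t2))
      = if pq.2 = pq.1 then
          (((pq.1 + n).choose n : ℂ) * ((pq.2 + n).choose n : ℂ) * a ^ (pq.1 + pq.2) *
            Complex.exp (Complex.I * pq.2 * t1)) * (2 * Real.pi) else 0 := by
    intro pq
    rw [MeasureTheory.integral_const_mul, orth]
    rcases eq_or_ne pq.2 pq.1 with h | h
    · rw [if_pos h, if_pos (by omega)]
    · rw [if_neg (by omega), if_neg h, mul_zero]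
  simp only [hterm]
  have hSumIte : Summable (fun pq : ℕ × ℕ => if pq.2 = pq.1 then
      (((pq.1 + n).choose n : ℂ) * ((pq.2 + n).choose n : ℂ) * a ^ (pq.1 + pq.2) *
        Complex.exp (Complex.I * pq.2 * t1)) * (2 * Real.pi : ℂ) else 0) := by
    apply Summable.of_norm_bounded (hSumK.mul_right (2 * Real.pi))
    intro pq
    rcases eq_or_ne pq.2 pq.1 with h | h
    · rw [if_pos h, norm_mul]
      have e1 : ‖Complex.exp (Complex.I * pq.2 * t1)‖ = 1 := by
        rw [Complex.norm_exp]; simp [Complex.mul_re, Complex.mul_im]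
      rw [norm_mul, norm_mul, norm_mul, e1, norm_pow, Complex.norm_natCast,
        Complex.norm_natCast, pow_add, mul_one]
      have e2 : ‖(2 * (Real.pi : ℂ))‖ = 2 * Real.pi := by
        rw [norm_mul]
        simp [Complex.norm_real, Real.pi_nonneg]
      rw [e2]
      apply le_of_eq; ring
    · rw [if_neg h]
      simp only [norm_zero]
      positivity
  rw [Summable.tsum_prod' hSumIte (fun b => summable_of_ne_finset_zero (s := {b})
      (fun c hc => if_neg (by simpa using hc)))]
  have step : ∀ p : ℕ, (∑' c : ℕ, if (p, c).2 = (p, c).1 then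
        (((p, c).1 + n).choose n : ℂ) * (((p, c).2 + n).choose n : ℂ) *
          a ^ ((p, c).1 + (p, c).2) *
          Complex.exp (Complex.I * (p, c).2 * t1) * (2 * Real.pi) else 0)
      = 2 * (Real.pi:ℂ) *
          (((p + n).choose n : ℂ) ^ 2 * a ^ (2*p) * Complex.exp (Complex.I * p * t1)) := by
    intro p
    rw [tsum_eq_single p (fun c hc => if_neg hc),
      if_pos (show ((p,p) : ℕ × ℕ).2 = (p,p).1 from rfl), two_mul]
    ring
  rw [tsum_congr step, tsum_mul_left]

lemma step1 {a : ℂ} (haa : ‖a‖ < 1) (b : ℂ) (n : ℕ) :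
    (∫ t1 in Set.Icc (-Real.pi) Real.pi,
      ((2 * Real.pi : ℂ) * ∑' p : ℕ,
        ((p + n).choose n : ℂ) ^ 2 * a ^ (2 * p) * Complex.exp (Complex.I * p * t1)) *
      ((2 * Real.pi : ℂ) * ∑ k ∈ Finset.range (n + 1),
        (n.choose k : ℂ) ^ 2 * b ^ (2 * k) * Complex.exp (-(Complex.I * k * t1))))
    = (2 * Real.pi : ℂ) ^ 3 * ∑ k ∈ Finset.range (n + 1),
        (n.choose k : ℂ) ^ 2 * ((k + n).choose n : ℂ) ^ 2 * (a ^ (2 * k) * b ^ (2 * k)) := by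
  have h2pi : (0:ℝ) ≤ 2 * Real.pi := by positivity
  set D : ℕ → ℂ := fun p => ((p + n).choose n : ℂ) ^ 2 * a ^ (2 * p) with hD
  set c : ℕ → ℂ := fun k => (n.choose k : ℂ) ^ 2 * b ^ (2 * k) with hc
  -- the function after merging
  set F : ℕ → ℝ → ℂ := fun p t1 => (2 * Real.pi : ℂ) ^ 2 *
      ∑ k ∈ Finset.range (n + 1), (D p * c k) *
        Complex.exp ((((p : ℤ) - (k : ℤ) : ℤ) : ℂ) * Complex.I * t1) with hF
  have Sreal : Summable (fun p : ℕ => ((p + n).choose n : ℝ) * ‖a‖ ^ p) := by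
    have := summable_choose_mul_geometric_of_norm_lt_one (R := ℝ) n
      (r := ‖a‖) (by simpa using haa)
    simpa using this
  have SD : Summable (fun p : ℕ => ((p + n).choose n : ℝ) ^ 2 * ‖a‖ ^ (2 * p)) := by
    set M : ℝ := ∑' p : ℕ, ((p + n).choose n : ℝ) * ‖a‖ ^ p with hM
    have hle : ∀ p : ℕ, ((p + n).choose n : ℝ) * ‖a‖ ^ p ≤ M :=
      fun p => Summable.le_tsum Sreal p (fun q _ => by positivity)
    apply Summable.of_nonneg_of_le (fun p => by positivity)
      (fun p => ?_) (Sreal.mul_left M)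
    have : ((p + n).choose n : ℝ) ^ 2 * ‖a‖ ^ (2 * p)
        = (((p + n).choose n : ℝ) * ‖a‖ ^ p) * (((p + n).choose n : ℝ) * ‖a‖ ^ p) := by
      rw [two_mul, pow_add]; ring
    rw [this]
    exact mul_le_mul_of_nonneg_right (hle p) (by positivity)
  have normD : ∀ p : ℕ, ‖D p‖ = ((p + n).choose n : ℝ) ^ 2 * ‖a‖ ^ (2 * p) := by
    intro p
    rw [hD]
    simp only [norm_mul, norm_pow, Complex.norm_natCast]
  -- pointwise identity
  have pointwise : ∀ t1 : ℝ,
      ((2 * Real.pi : ℂ) * ∑' p : ℕ,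
        ((p + n).choose n : ℂ) ^ 2 * a ^ (2 * p) * Complex.exp (Complex.I * p * t1)) *
      ((2 * Real.pi : ℂ) * ∑ k ∈ Finset.range (n + 1),
        (n.choose k : ℂ) ^ 2 * b ^ (2 * k) * Complex.exp (-(Complex.I * k * t1)))
      = ∑' p : ℕ, F p t1 := by
    intro t1
    rw [show ((2 * Real.pi : ℂ) * ∑' p : ℕ,
        ((p + n).choose n : ℂ) ^ 2 * a ^ (2 * p) * Complex.exp (Complex.I * p * t1)) *
      ((2 * Real.pi : ℂ) * ∑ k ∈ Finset.range (n + 1),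
        (n.choose k : ℂ) ^ 2 * b ^ (2 * k) * Complex.exp (-(Complex.I * k * t1)))
      = (2 * Real.pi : ℂ) ^ 2 * ((∑' p : ℕ,
          ((p + n).choose n : ℂ) ^ 2 * a ^ (2 * p) * Complex.exp (Complex.I * p * t1)) *
        (∑ k ∈ Finset.range (n + 1),
          (n.choose k : ℂ) ^ 2 * b ^ (2 * k) * Complex.exp (-(Complex.I * k * t1)))) from by ring]
    rw [← tsum_mul_right, ← tsum_mul_left]
    apply tsum_congr
    intro p
    rw [hF]
    simp only
    rw [Finset.mul_sum, Finset.mul_sum, Finset.mul_sum]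
    apply Finset.sum_congr rfl
    intro k _
    calc (2 * Real.pi : ℂ) ^ 2 * (((p + n).choose n : ℂ) ^ 2 * a ^ (2 * p) *
            Complex.exp (Complex.I * p * t1) *
            ((n.choose k : ℂ) ^ 2 * b ^ (2 * k) * Complex.exp (-(Complex.I * k * t1))))
        = (2 * Real.pi : ℂ) ^ 2 * ((D p * c k) *
            (Complex.exp (Complex.I * p * t1) * Complex.exp (-(Complex.I * k * t1)))) := by
          rw [hD, hc]; ring
      _ = (2 * Real.pi : ℂ) ^ 2 * ((D p * c k) *
            Complex.exp ((((p : ℤ) - (k : ℤ) : ℤ) : ℂ) * Complex.I * t1)) := by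
          rw [← Complex.exp_add,
            show Complex.I * p * t1 + -(Complex.I * k * t1)
              = (((p:ℂ) - (k:ℂ))) * Complex.I * t1 from by ring]
          push_cast
          ring_nf
  simp only [pointwise]
  -- integrability of each F p
  have hInt : ∀ p : ℕ, Integrable (F p)
      (volume.restrict (Set.Icc (-Real.pi) Real.pi)) := by
    intro p
    rw [hF]
    simp only
    apply Integrable.const_mul
    apply MeasureTheory.integrable_finset_sum
    intro k _
    exact (intOn (D p * c k) ((((p : ℤ) - (k : ℤ) : ℤ) : ℂ) * Complex.I)).mono_measure
      (le_of_eq rfl) |>.congr (Filter.EventuallyEq.of_eq (funext fun t => by rw [mul_assoc]))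
      |>.congr (Filter.EventuallyEq.of_eq rfl)
  -- norm bound for F p
  have hCc : (0:ℝ) ≤ ∑ k ∈ Finset.range (n+1), ‖c k‖ :=
    Finset.sum_nonneg fun k _ => norm_nonneg _
  have hnormF : ∀ (p : ℕ) (t1 : ℝ), ‖F p t1‖ ≤ (2 * Real.pi) ^ 2 *
      (‖D p‖ * ∑ k ∈ Finset.range (n+1), ‖c k‖) := by
    intro p t1
    rw [hF]
    simp only
    rw [norm_mul]
    have e0 : ‖((2 * Real.pi : ℂ)) ^ 2‖ = (2 * Real.pi) ^ 2 := by
      rw [norm_pow, norm_mul]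
      simp [Complex.norm_real, Real.pi_nonneg]
    rw [e0]
    apply mul_le_mul_of_nonneg_left _ (by positivity)
    calc ‖∑ k ∈ Finset.range (n+1), (D p * c k) *
          Complex.exp ((((p : ℤ) - (k : ℤ) : ℤ) : ℂ) * Complex.I * t1)‖
        ≤ ∑ k ∈ Finset.range (n+1), ‖(D p * c k) *
          Complex.exp ((((p : ℤ) - (k : ℤ) : ℤ) : ℂ) * Complex.I * t1)‖ :=
          norm_sum_le _ _
      _ = ∑ k ∈ Finset.range (n+1), ‖D p‖ * ‖c k‖ := by
          apply Finset.sum_congr rfl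
          intro k _
          have e1 : ‖Complex.exp ((((p : ℤ) - (k : ℤ) : ℤ) : ℂ) * Complex.I * t1)‖ = 1 := by
            rw [Complex.norm_exp]
            simp [Complex.mul_re, Complex.mul_im]
          rw [norm_mul, norm_mul, e1, mul_one]
      _ = ‖D p‖ * ∑ k ∈ Finset.range (n+1), ‖c k‖ := by rw [Finset.mul_sum]
  have hSum : Summable (fun p : ℕ => ∫ t1 in Set.Icc (-Real.pi) Real.pi, ‖F p t1‖) := by
    have hg : Summable (fun p : ℕ => ((2 * Real.pi) ^ 2 *
        (‖D p‖ * ∑ k ∈ Finset.range (n+1), ‖c k‖)) * (2 * Real.pi)) := by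
      apply Summable.mul_right
      apply Summable.mul_left
      apply Summable.mul_right
      apply Summable.congr SD
      intro p
      rw [normD]
    apply Summable.of_nonneg_of_le
      (fun p => MeasureTheory.integral_nonneg (fun t => norm_nonneg _)) (fun p => ?_) hg
    calc (∫ t1 in Set.Icc (-Real.pi) Real.pi, ‖F p t1‖)
        ≤ ∫ _t1 in Set.Icc (-Real.pi) Real.pi,
            ((2 * Real.pi) ^ 2 * (‖D p‖ * ∑ k ∈ Finset.range (n+1), ‖c k‖)) := by
          apply MeasureTheory.setIntegral_mono_on ((hInt p).norm)
            ((MeasureTheory.integrableOn_const_iff).2 (Or.inr (by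
              rw [Real.volume_Icc]; exact ENNReal.ofReal_lt_top)))
            measurableSet_Icc
          intro t1 _
          exact hnormF p t1
      _ = ((2 * Real.pi) ^ 2 * (‖D p‖ * ∑ k ∈ Finset.range (n+1), ‖c k‖)) * (2 * Real.pi) := by
          rw [MeasureTheory.setIntegral_const, Real.volume_real_Icc, smul_eq_mul,
            max_eq_left (by linarith)]
          ring
  rw [← MeasureTheory.integral_tsum_of_summable_integral_norm hInt hSum]
  -- termwise integral
  have hterm : ∀ p : ℕ,
      (∫ t1 in Set.Icc (-Real.pi) Real.pi, F p t1)
      = (2 * Real.pi : ℂ) ^ 2 * (if p ∈ Finset.range (n+1) then D p * c p * (2 * Real.pi : ℂ)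
          else 0) := by
    intro p
    rw [hF]
    simp only
    rw [MeasureTheory.integral_const_mul,
      MeasureTheory.integral_finset_sum _ (fun k _ => intOn (D p * c k)
        ((((p : ℤ) - (k : ℤ) : ℤ) : ℂ) * Complex.I))]
    congr 1
    have hterm2 : ∀ k ∈ Finset.range (n+1),
        (∫ t1 in Set.Icc (-Real.pi) Real.pi, (D p * c k) *
          Complex.exp ((((p : ℤ) - (k : ℤ) : ℤ) : ℂ) * Complex.I * t1))
        = if k = p then (D p * c k) * (2 * Real.pi : ℂ) else 0 := by
      intro k _
      rw [MeasureTheory.integral_const_mul, orth]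
      rcases eq_or_ne k p with h | h
      · rw [if_pos h, if_pos (by omega)]
      · rw [if_neg (by omega), if_neg h, mul_zero]
    rw [Finset.sum_congr rfl hterm2, Finset.sum_ite_eq' (Finset.range (n+1)) p]
  simp only [hterm]
  rw [tsum_eq_sum (s := Finset.range (n+1))
    (fun p hp => by rw [if_neg hp, mul_zero]), Finset.mul_sum]
  apply Finset.sum_congr rfl
  intro k hk
  rw [if_pos hk, hD, hc]
  ring

lemma alg (x1 x2 y : ℂ) (nn : ℕ) :
    ((x1 * x2) / y) ^ nn * y⁻¹ = (x1 ^ nn * x2 ^ nn) * (y ^ (nn + 1))⁻¹ := by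
  rw [div_pow, mul_pow, div_eq_mul_inv, mul_assoc, ← mul_inv, ← pow_succ]

lemma one_sub_ne {u : ℂ} (hu : ‖u‖ < 1) : (1 : ℂ) - u ≠ 0 := by
  intro h
  have h1 : (1 : ℂ) = u := by linear_combination h
  rw [← h1] at hu
  simp at hu

lemma norm_aexp' (a : ℂ) (r : ℝ) : ‖a * Complex.exp (Complex.I * r)‖ = ‖a‖ := by
  rw [norm_mul, Complex.norm_exp]
  simp [Complex.mul_re]

/-- Multivariate integral representation of the Apéry polynomials: for
`z ∈ ℂ \ (−∞,0]`, `a(z) = √(z+√z) − √z`, `b(z) = √(z+√z) + √z` (principal branches) and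
every `n ≥ 1`,
`B_n(z) = (2π)^{-3} ∫_{[−π,π]³} {((1+b e^{it₃})(1+b e^{−i(t₁+t₃)}))/((1−a e^{it₂})(1−a e^{i(t₁−t₂)}))}^n
  · ((1−a e^{it₂})(1−a e^{i(t₁−t₂)}))^{-1} d(t₁,t₂,t₃)`. -/
theorem stmt_10 (z : ℂ) (hz : ∀ x : ℝ, x ≤ 0 → z ≠ (x : ℂ))
    (a b : ℂ)
    (ha : a = (z + z ^ (1/2 : ℂ)) ^ (1/2 : ℂ) - z ^ (1/2 : ℂ))
    (hb : b = (z + z ^ (1/2 : ℂ)) ^ (1/2 : ℂ) + z ^ (1/2 : ℂ))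
    (n : ℕ) (hn : 1 ≤ n) :
    ∑ k ∈ Finset.range (n + 1),
        ((n.choose k : ℂ)) ^ 2 * (((n + k).choose k : ℂ)) ^ 2 * z ^ k =
      (2 * (Real.pi : ℂ)) ^ (-3 : ℤ) *
        ∫ t in Set.Icc ((-Real.pi, -Real.pi, -Real.pi) : ℝ × ℝ × ℝ)
            ((Real.pi, Real.pi, Real.pi) : ℝ × ℝ × ℝ),
          (((1 + b * Complex.exp (Complex.I * t.2.2)) *
              (1 + b * Complex.exp (-(Complex.I * (t.1 + t.2.2))))) /
            ((1 - a * Complex.exp (Complex.I * t.2.1)) *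
              (1 - a * Complex.exp (Complex.I * (t.1 - t.2.1))))) ^ n *
          ((1 - a * Complex.exp (Complex.I * t.2.1)) *
            (1 - a * Complex.exp (Complex.I * (t.1 - t.2.1))))⁻¹ := by
  obtain ⟨haa, hab⟩ := key_facts hz
  rw [← ha] at haa
  rw [← ha, ← hb] at hab
  -- nonvanishing of denominators
  have hne : ∀ t2 t1 : ℝ, (1 - a * Complex.exp (Complex.I * t2)) *
      (1 - a * Complex.exp (Complex.I * ((t1:ℂ) - (t2:ℂ)))) ≠ 0 := by
    intro t2 t1
    apply mul_ne_zero
    · exact one_sub_ne (by rw [norm_aexp']; exact haa)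
    · apply one_sub_ne
      rw [show ((t1:ℂ) - (t2:ℂ)) = ((t1 - t2 : ℝ) : ℂ) from by push_cast; ring, norm_aexp']
      exact haa
  -- continuity of the integrand
  set G : ℝ × ℝ × ℝ → ℂ := fun t =>
      (((1 + b * Complex.exp (Complex.I * t.2.2)) *
          (1 + b * Complex.exp (-(Complex.I * (t.1 + t.2.2))))) /
        ((1 - a * Complex.exp (Complex.I * t.2.1)) *
          (1 - a * Complex.exp (Complex.I * (t.1 - t.2.1))))) ^ n *
      ((1 - a * Complex.exp (Complex.I * t.2.1)) *
        (1 - a * Complex.exp (Complex.I * (t.1 - t.2.1))))⁻¹ with hG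
  have hGeq : ∀ t : ℝ × ℝ × ℝ, G t =
      ((1 + b * Complex.exp (Complex.I * t.2.2)) ^ n *
        (1 + b * Complex.exp (-(Complex.I * ((t.1:ℂ) + (t.2.2:ℂ))))) ^ n) *
      (((1 - a * Complex.exp (Complex.I * t.2.1)) *
        (1 - a * Complex.exp (Complex.I * ((t.1:ℂ) - (t.2.1:ℂ))))) ^ (n+1))⁻¹ := by
    intro t
    rw [hG]
    exact alg _ _ _ n
  have hNcont : Continuous (fun t : ℝ × ℝ × ℝ =>
      (1 + b * Complex.exp (Complex.I * t.2.2)) ^ n *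
        (1 + b * Complex.exp (-(Complex.I * ((t.1:ℂ) + (t.2.2:ℂ))))) ^ n) := by fun_prop
  have hDcont : Continuous (fun t : ℝ × ℝ × ℝ =>
      ((1 - a * Complex.exp (Complex.I * t.2.1)) *
        (1 - a * Complex.exp (Complex.I * ((t.1:ℂ) - (t.2.1:ℂ))))) ^ (n+1)) := by fun_prop
  have hGcont : Continuous G := by
    rw [show G = fun t : ℝ × ℝ × ℝ =>
      ((1 + b * Complex.exp (Complex.I * t.2.2)) ^ n *
        (1 + b * Complex.exp (-(Complex.I * ((t.1:ℂ) + (t.2.2:ℂ))))) ^ n) *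
      (((1 - a * Complex.exp (Complex.I * t.2.1)) *
        (1 - a * Complex.exp (Complex.I * ((t.1:ℂ) - (t.2.1:ℂ))))) ^ (n+1))⁻¹
      from funext hGeq]
    exact hNcont.mul (hDcont.inv₀ (fun t => pow_ne_zero _ (hne t.2.1 t.1)))
  have hle : (-Real.pi : ℝ) ≤ Real.pi := by linarith [Real.pi_pos]
  have hbox : Set.Icc ((-Real.pi, -Real.pi, -Real.pi) : ℝ × ℝ × ℝ)
      ((Real.pi, Real.pi, Real.pi) : ℝ × ℝ × ℝ)
      = Set.Icc (-Real.pi) Real.pi ×ˢ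
        (Set.Icc (-Real.pi) Real.pi ×ˢ Set.Icc (-Real.pi) Real.pi) := by
    rw [Set.Icc_prod_eq, Set.Icc_prod_eq]
  have hIntBox : IntegrableOn G
      (Set.Icc (-Real.pi) Real.pi ×ˢ
        (Set.Icc (-Real.pi) Real.pi ×ˢ Set.Icc (-Real.pi) Real.pi))
      ((volume : Measure ℝ).prod (volume : Measure (ℝ × ℝ))) := by
    rw [← MeasureTheory.Measure.volume_eq_prod]
    exact hGcont.continuousOn.integrableOn_compact
      (isCompact_Icc.prod (isCompact_Icc.prod isCompact_Icc))
  have hmain : (∫ t in Set.Icc ((-Real.pi, -Real.pi, -Real.pi) : ℝ × ℝ × ℝ)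
      ((Real.pi, Real.pi, Real.pi) : ℝ × ℝ × ℝ), G t)
      = (2 * Real.pi : ℂ) ^ 3 * ∑ k ∈ Finset.range (n + 1),
        (n.choose k : ℂ) ^ 2 * ((k + n).choose n : ℂ) ^ 2 * (a ^ (2 * k) * b ^ (2 * k)) := by
    rw [hbox, MeasureTheory.Measure.volume_eq_prod,
      MeasureTheory.setIntegral_prod _ hIntBox]
    have hGeq2 : ∀ t1 t2 t3 : ℝ, G (t1, (t2, t3)) =
        (((1 - a * Complex.exp (Complex.I * t2)) *
          (1 - a * Complex.exp (Complex.I * ((t1:ℂ) - (t2:ℂ))))) ^ (n+1))⁻¹ *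
        ((1 + b * Complex.exp (Complex.I * t3)) ^ n *
          (1 + b * Complex.exp (-(Complex.I * ((t1:ℂ) + (t3:ℂ))))) ^ n) := by
      intro t1 t2 t3
      rw [hGeq (t1, (t2, t3))]
      ring
    have inner : ∀ t1 : ℝ,
        (∫ y in Set.Icc (-Real.pi) Real.pi ×ˢ Set.Icc (-Real.pi) Real.pi,
          G (t1, y) ∂(volume : Measure (ℝ × ℝ)))
        = ((2 * Real.pi : ℂ) * ∑' p : ℕ,
            ((p + n).choose n : ℂ) ^ 2 * a ^ (2 * p) * Complex.exp (Complex.I * p * t1)) *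
          ((2 * Real.pi : ℂ) * ∑ k ∈ Finset.range (n + 1),
            (n.choose k : ℂ) ^ 2 * b ^ (2 * k) * Complex.exp (-(Complex.I * k * t1))) := by
      intro t1
      have hint1 : IntegrableOn (fun y : ℝ × ℝ => G (t1, y))
          (Set.Icc (-Real.pi) Real.pi ×ˢ Set.Icc (-Real.pi) Real.pi)
          ((volume : Measure ℝ).prod (volume : Measure ℝ)) := by
        rw [← MeasureTheory.Measure.volume_eq_prod]
        exact (hGcont.comp (Continuous.prodMk_right t1)).continuousOn.integrableOn_compact
          (isCompact_Icc.prod isCompact_Icc)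
      rw [MeasureTheory.Measure.volume_eq_prod, MeasureTheory.setIntegral_prod _ hint1]
      simp only [hGeq2]
      have inner2 : ∀ t2 : ℝ,
          (∫ t3 in Set.Icc (-Real.pi) Real.pi,
            (((1 - a * Complex.exp (Complex.I * t2)) *
              (1 - a * Complex.exp (Complex.I * ((t1:ℂ) - (t2:ℂ))))) ^ (n+1))⁻¹ *
            ((1 + b * Complex.exp (Complex.I * t3)) ^ n *
              (1 + b * Complex.exp (-(Complex.I * ((t1:ℂ) + (t3:ℂ))))) ^ n))
          = (((1 - a * Complex.exp (Complex.I * t2)) *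
              (1 - a * Complex.exp (Complex.I * ((t1:ℂ) - (t2:ℂ))))) ^ (n+1))⁻¹ *
            ((2 * Real.pi : ℂ) * ∑ k ∈ Finset.range (n + 1),
              (n.choose k : ℂ) ^ 2 * b ^ (2 * k) * Complex.exp (-(Complex.I * k * t1))) := by
        intro t2
        rw [MeasureTheory.integral_const_mul, step3]
      simp only [inner2]
      rw [MeasureTheory.integral_mul_const, step2 haa]
    simp only [inner]
    exact step1 haa b n
  rw [hmain]
  have h2pine : (2 * (Real.pi : ℂ)) ≠ 0 := by
    apply mul_ne_zero two_ne_zero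
    exact_mod_cast Complex.ofReal_ne_zero.2 Real.pi_ne_zero
  rw [← mul_assoc,
    show ((2 * (Real.pi:ℂ)) ^ (-3:ℤ) * (2 * (Real.pi:ℂ)) ^ 3 : ℂ) = 1 from by
      rw [show ((2 * (Real.pi:ℂ)) ^ (3:ℕ) : ℂ) = (2 * (Real.pi:ℂ)) ^ ((3:ℕ):ℤ) from
        (zpow_natCast _ 3).symm, ← zpow_add₀ h2pine]
      norm_num,
    one_mul]
  apply Finset.sum_congr rfl
  intro k _
  have hchoose : ((k + n).choose n) = ((n + k).choose k) := by
    rw [add_comm k n, Nat.choose_symm_add]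
  rw [hchoose]
  have hz2 : a ^ (2 * k) * b ^ (2 * k) = z ^ k := by
    rw [← mul_pow, hab, pow_mul, sqrt_sq']
  rw [hz2]
end

section
/- Let r be a positive integer and let A be a complex symmetric r×r matrix whose real part (the real symmetric matrix of entrywise real parts) is positive definite. Then ∫_{ℝ^r} e^{−(1/2) tᵀ A t} dt converges absolutely and there exists w ∈ ℂ with w² = det A such that ∫_{ℝ^r} e^{−(1/2) tᵀ A t} dt = (2π)^{r/2} / w; moreover, when A has real entries (hence is real positive definite), w = √(det A) is the positive real square root. -/
open MeasureTheory Matrix Complex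
open MeasureTheory Matrix

theorem cov_integral {r : ℕ} (P : Matrix (Fin r) (Fin r) ℝ) (hP : P.det ≠ 0)
    (g : (Fin r → ℝ) → ℂ) :
    (Integrable g ↔ Integrable (fun s => g (P.mulVec s))) ∧
      ∫ t, g t = |P.det| * ∫ s, g (P.mulVec s) := by
  have hInv : Invertible P := P.invertibleOfIsUnitDet (isUnit_iff_ne_zero.mpr hP)
  let e : (Fin r → ℝ) ≃ᵐ (Fin r → ℝ) :=
    (Matrix.toLinearEquiv' P hInv).toContinuousLinearEquiv.toHomeomorph.toMeasurableEquiv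
  have he : ⇑e = fun s => P.mulVec s := by
    funext s
    show Matrix.toLinearEquiv' P hInv s = _
    simp [Matrix.toLinearEquiv', Matrix.toLin'_apply]
  have he' : ⇑e = ⇑(Matrix.toLin' P) := by
    rw [he]; funext s; exact (Matrix.toLin'_apply P s).symm
  have hmap : Measure.map e volume = ENNReal.ofReal |P.det|⁻¹ • volume := by
    rw [he', Real.map_linearMap_volume_pi_eq_smul_volume_pi
      (by rw [LinearMap.det_toLin']; exact hP), LinearMap.det_toLin', abs_inv]
  have hpos : (0:ℝ) < |P.det| := abs_pos.mpr hP
  have hint : ∀ f : (Fin r → ℝ) → ℂ, Integrable f (Measure.map e volume) ↔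
      Integrable (fun s => f (e s)) volume := fun f => integrable_map_equiv e f
  constructor
  · have h2 := hint g
    rw [hmap, integrable_smul_measure (by simpa using hP)
      ENNReal.ofReal_ne_top] at h2
    simpa [he] using h2
  · have h1 : ∫ s, g (P.mulVec s) = ∫ t, g t ∂(Measure.map e volume) := by
      rw [integral_map_equiv e g, he]
    rw [h1, hmap, integral_smul_measure, ENNReal.toReal_ofReal (by positivity),
      Complex.real_smul, ← mul_assoc, ← Complex.ofReal_mul, mul_inv_cancel₀ hpos.ne']
    simp

theorem diag_exists {r : ℕ} (A : Matrix (Fin r) (Fin r) ℂ)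
    (hsymm : A.IsSymm) (hpos : (A.map Complex.re).PosDef) :
    ∃ (P : Matrix (Fin r) (Fin r) ℝ) (d : Fin r → ℂ), P.det ≠ 0 ∧ (∀ j, (d j).re = 1) ∧
      (P.map Complex.ofRealHom)ᵀ * A * (P.map Complex.ofRealHom) = diagonal d := by
  classical
  set B : Matrix (Fin r) (Fin r) ℝ := A.map Complex.re with hB
  set C : Matrix (Fin r) (Fin r) ℝ := A.map Complex.im with hC
  have hBinv : B⁻¹.PosDef := hpos.inv
  open scoped MatrixOrder in
  set R : Matrix (Fin r) (Fin r) ℝ := CFC.sqrt B⁻¹ with hRdef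
  have hRR : R * R = B⁻¹ := by
    open scoped MatrixOrder in
    exact CFC.sqrt_mul_sqrt_self _ hBinv.posSemidef.nonneg
  have hRsymm : Rᵀ = R := by
    have := (open scoped MatrixOrder in (CFC.sqrt_nonneg B⁻¹).posSemidef).1
    rwa [Matrix.IsHermitian, conjTranspose_eq_transpose_of_trivial] at this
  have hBdet : B.det ≠ 0 := hpos.det_pos.ne'
  have hRdet : R.det ≠ 0 := by
    intro h
    have : (R * R).det = 0 := by rw [det_mul, h, mul_zero]
    rw [hRR, det_nonsing_inv] at this
    exact hBdet (by simpa using this)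
  have hRBR : R * B * R = 1 := by
    have h1 : B = R⁻¹ * R⁻¹ := by
      rw [← Matrix.mul_inv_rev, hRR, Matrix.nonsing_inv_nonsing_inv _ (isUnit_iff_ne_zero.mpr hBdet)]
    have hu := isUnit_iff_ne_zero.mpr hRdet
    calc R * B * R = (R * R⁻¹) * (R⁻¹ * R) := by rw [h1]; noncomm_ring
      _ = 1 := by rw [Matrix.mul_nonsing_inv _ hu, Matrix.nonsing_inv_mul _ hu, one_mul]
  have hCsymm : Cᵀ = C := hsymm.map Complex.im
  set M : Matrix (Fin r) (Fin r) ℝ := R * C * R with hMdef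
  have hM : M.IsHermitian := by
    rw [Matrix.IsHermitian, conjTranspose_eq_transpose_of_trivial, hMdef,
      transpose_mul, transpose_mul, hRsymm, hCsymm, mul_assoc]
  set V : Matrix (Fin r) (Fin r) ℝ := (hM.eigenvectorUnitary : Matrix (Fin r) (Fin r) ℝ) with hV
  have hVdiag : Vᵀ * M * V = diagonal hM.eigenvalues := by
    have := hM.conjStarAlgAut_star_eigenvectorUnitary
    simpa [hV, star_eq_conjTranspose, conjTranspose_eq_transpose_of_trivial] using this
  have hVV : Vᵀ * V = 1 := by
    have := (Matrix.mem_unitaryGroup_iff').mp hM.eigenvectorUnitary.2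
    simpa [hV, star_eq_conjTranspose, conjTranspose_eq_transpose_of_trivial] using this
  have hVdet : V.det ≠ 0 := by
    intro h
    have : (Vᵀ * V).det = 0 := by rw [det_mul, h, mul_zero]
    rw [hVV] at this; simp at this
  refine ⟨R * V, fun j => 1 + hM.eigenvalues j * Complex.I, by
      rw [det_mul]; exact mul_ne_zero hRdet hVdet, fun j => by simp, ?_⟩
  -- over ℂ
  have hA : A = B.map Complex.ofRealHom + Complex.I • C.map Complex.ofRealHom := by
    ext i j
    simp only [Matrix.add_apply, Matrix.smul_apply, Matrix.map_apply, smul_eq_mul, hB, hC]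
    rw [mul_comm]
    exact (Complex.re_add_im _).symm
  set φ := Complex.ofRealHom with hφ
  have hmapmul : ∀ (X Y : Matrix (Fin r) (Fin r) ℝ), (X * Y).map φ = X.map φ * Y.map φ :=
    fun X Y => Matrix.map_mul
  have hmapT : ∀ (X : Matrix (Fin r) (Fin r) ℝ), (Xᵀ).map φ = (X.map φ)ᵀ :=
    fun X => rfl
  have key1 : ((R*V)ᵀ).map φ * B.map φ * ((R*V)).map φ = 1 := by
    rw [← hmapmul, ← hmapmul]
    have : (R*V)ᵀ * B * (R*V) = 1 := by
      rw [transpose_mul, hRsymm]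
      calc Vᵀ * R * B * (R * V) = Vᵀ * (R * B * R) * V := by noncomm_ring
        _ = 1 := by rw [hRBR, mul_one, hVV]
    rw [this]; simp
  have key2 : ((R*V)ᵀ).map φ * C.map φ * ((R*V)).map φ = diagonal (φ ∘ hM.eigenvalues) := by
    rw [← hmapmul, ← hmapmul]
    have : (R*V)ᵀ * C * (R*V) = diagonal hM.eigenvalues := by
      rw [transpose_mul, hRsymm]
      calc Vᵀ * R * C * (R * V) = Vᵀ * (R * C * R) * V := by noncomm_ring
        _ = diagonal hM.eigenvalues := hVdiag
    rw [this, Matrix.diagonal_map (map_zero φ)]; rfl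
  rw [hA]
  rw [mul_add, add_mul, Matrix.mul_smul, Matrix.smul_mul]
  rw [hmapT] at key1 key2
  rw [key1, key2]
  ext i j
  simp [Matrix.diagonal_apply, Matrix.one_apply, hφ]
  split <;> simp [mul_comm]

theorem quad_eq {r : ℕ} (A : Matrix (Fin r) (Fin r) ℂ) (P : Matrix (Fin r) (Fin r) ℝ)
    (d : Fin r → ℂ)
    (hkey : (P.map Complex.ofRealHom)ᵀ * A * (P.map Complex.ofRealHom) = diagonal d)
    (s : Fin r → ℝ) :
    ∑ j, ∑ k, A j k * ((P.mulVec s) j : ℂ) * ((P.mulVec s) k : ℂ)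
      = ∑ j, d j * (s j : ℂ)^2 := by
  set φ := Complex.ofRealHom with hφ
  set Pc := P.map φ with hPc
  set sc : Fin r → ℂ := fun j => (s j : ℂ) with hsc
  have hu : (fun j => ((P.mulVec s) j : ℂ)) = Pc.mulVec sc := by
    funext j
    exact RingHom.map_mulVec φ P s j
  have h1 : ∑ j, ∑ k, A j k * ((P.mulVec s) j : ℂ) * ((P.mulVec s) k : ℂ)
      = (Pc.mulVec sc) ⬝ᵥ (A *ᵥ (Pc.mulVec sc)) := by
    rw [← hu]
    simp only [dotProduct, mulVec]
    refine Finset.sum_congr rfl fun j _ => ?_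
    rw [Finset.mul_sum]
    exact Finset.sum_congr rfl fun k _ => by ring
  rw [h1, Matrix.mulVec_mulVec, ← Matrix.vecMul_transpose, Matrix.dotProduct_mulVec,
    Matrix.vecMul_vecMul, ← mul_assoc, hkey]
  simp only [dotProduct, Matrix.vecMul_diagonal]
  exact Finset.sum_congr rfl fun j _ => by ring

/-- Complex Gaussian integral: for a complex symmetric `r×r` matrix `A` whose entrywise
real part is positive definite, `∫_{ℝ^r} e^{−(1/2)tᵀAt} dt` converges absolutely and equals
`(2π)^{r/2}/w` for some `w` with `w² = det A`; if `A` is real, `w = √(det A)`. -/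
theorem stmt_15 (r : ℕ) (hr : 0 < r) (A : Matrix (Fin r) (Fin r) ℂ)
    (hsymm : A.IsSymm) (hpos : (A.map Complex.re).PosDef) :
    MeasureTheory.Integrable (fun t : Fin r → ℝ =>
      Complex.exp (-(1 / 2 : ℂ) * ∑ j, ∑ k, A j k * (t j : ℂ) * (t k : ℂ))) ∧
    ∃ w : ℂ, w ^ 2 = A.det ∧
      (∫ t : Fin r → ℝ,
          Complex.exp (-(1 / 2 : ℂ) * ∑ j, ∑ k, A j k * (t j : ℂ) * (t k : ℂ))) =
        (((2 * Real.pi) ^ ((r : ℝ) / 2) : ℝ) : ℂ) / w ∧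
      ((∀ i j, (A i j).im = 0) → w = (Real.sqrt A.det.re : ℂ)) := by
  obtain ⟨P, d, hPdet, hdre, hkey⟩ := diag_exists A hsymm hpos
  set g : (Fin r → ℝ) → ℂ := fun t =>
    Complex.exp (-(1 / 2 : ℂ) * ∑ j, ∑ k, A j k * (t j : ℂ) * (t k : ℂ)) with hg
  have hdne : ∀ j, d j ≠ 0 := fun j h => by simpa [h] using hdre j
  have hdre2 : ∀ j, (0:ℝ) < (d j / 2).re := fun j => by
    rw [Complex.div_re]
    simp [hdre j, Complex.normSq]
  -- the composed function is a product of 1D Gaussians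
  have hcomp : (fun s => g (P.mulVec s))
      = fun s => ∏ j, Complex.exp (-(d j / 2) * (s j : ℂ)^2) := by
    funext s
    rw [hg]
    simp only
    rw [quad_eq A P d hkey s, ← Complex.exp_sum]
    congr 1
    rw [Finset.mul_sum]
    exact Finset.sum_congr rfl fun j _ => by ring
  have hfac : ∀ j, Integrable fun x : ℝ => Complex.exp (-(d j / 2) * (x : ℂ)^2) :=
    fun j => integrable_cexp_neg_mul_sq (hdre2 j)
  have hint_s : Integrable (fun s => g (P.mulVec s)) := by
    rw [hcomp]
    exact Integrable.fintype_prod (f := fun j (x : ℝ) => Complex.exp (-(d j / 2) * (x:ℂ)^2)) hfac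
  obtain ⟨hiff, hval⟩ := cov_integral P hPdet g
  refine ⟨hiff.mpr hint_s, ?_⟩
  -- value of the transformed integral
  have hprod : ∫ s, g (P.mulVec s) = ∏ j, ((Real.pi : ℂ) / (d j / 2)) ^ (1/2 : ℂ) := by
    rw [hcomp, volume_pi, integral_fintype_prod_eq_prod
      (fun j (x : ℝ) => Complex.exp (-(d j / 2) * (x:ℂ)^2))]
    exact Finset.prod_congr rfl fun j _ => integral_gaussian_complex (hdre2 j)
  set c : Fin r → ℂ := fun j => (Real.pi : ℂ) / (d j / 2) with hc
  have hcval : ∀ j, c j = 2 * (Real.pi : ℂ) / d j := fun j => by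
    rw [hc]; field_simp
  have hcne : ∀ j, c j ≠ 0 := fun j => by
    rw [hcval j]
    exact div_ne_zero (by simp [Real.pi_ne_zero]) (hdne j)
  have hcpowne : ∀ j, (c j) ^ (1/2 : ℂ) ≠ 0 := fun j => by
    simp [Complex.cpow_eq_zero_iff, hcne j]
  have hcpowsq : ∀ j, ((c j) ^ (1/2 : ℂ))^2 = c j := fun j => by
    rw [sq, ← Complex.cpow_add _ _ (hcne j)]
    norm_num
  set Dden : ℂ := ((|P.det| : ℝ) : ℂ) * ∏ j, (c j) ^ (1/2 : ℂ) with hD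
  have hDne : Dden ≠ 0 := by
    rw [hD]
    exact mul_ne_zero (Complex.ofReal_ne_zero.mpr (abs_ne_zero.mpr hPdet))
      (Finset.prod_ne_zero_iff.mpr fun j _ => hcpowne j)
  have hintval : (∫ t, g t) = Dden := by
    rw [hval, hprod, hD]
  -- nonzero facts
  have hprodd : (∏ j, d j) ≠ 0 := Finset.prod_ne_zero_iff.mpr fun j _ => hdne j
  have hPdc : (P.det : ℂ) ≠ 0 := Complex.ofReal_ne_zero.mpr hPdet
  -- determinant relation
  have hdetkey : A.det * (P.det : ℂ)^2 = ∏ j, d j := by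
    have hh := congrArg Matrix.det hkey
    rw [det_mul, det_mul, det_transpose, det_diagonal] at hh
    have hPc : (P.map ⇑Complex.ofRealHom).det = (P.det : ℂ) := by
      rw [show P.map ⇑Complex.ofRealHom = Complex.ofRealHom.mapMatrix P from rfl,
        ← RingHom.map_det]
      rfl
    rw [hPc] at hh
    linear_combination hh
  have hAdet : A.det = (∏ j, d j) / (P.det:ℂ)^2 := by
    rw [eq_div_iff (pow_ne_zero 2 hPdc)]; exact hdetkey
  set N : ℂ := (((2 * Real.pi) ^ ((r : ℝ) / 2) : ℝ) : ℂ) with hNdef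
  have hNposR : (0:ℝ) < (2 * Real.pi) ^ ((r : ℝ) / 2) :=
    Real.rpow_pos_of_pos (by positivity) _
  have hNne : N ≠ 0 := Complex.ofReal_ne_zero.mpr hNposR.ne'
  have hNsqR : ((2 * Real.pi) ^ ((r:ℝ)/2))^2 = (2 * Real.pi)^(r:ℕ) := by
    rw [← Real.rpow_natCast ((2 * Real.pi) ^ ((r:ℝ)/2)) 2, ← Real.rpow_mul (by positivity),
      ← Real.rpow_natCast (2 * Real.pi) r]
    norm_num
  have hNsq : N^2 = (2 * (Real.pi:ℂ))^(r:ℕ) := by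
    rw [hNdef, ← Complex.ofReal_pow, hNsqR]
    push_cast
    ring
  have hDsq : Dden^2 = (P.det:ℂ)^2 * ((2 * (Real.pi:ℂ))^(r:ℕ) / ∏ j, d j) := by
    rw [hD, mul_pow]
    have h1 : ((|P.det| : ℝ) : ℂ)^2 = (P.det:ℂ)^2 := by
      rw [← Complex.ofReal_pow, show |P.det|^2 = P.det^2 from sq_abs P.det,
        Complex.ofReal_pow]
    have h2 : (∏ j, c j ^ (1/2:ℂ))^2 = ∏ j, c j := by
      rw [← Finset.prod_pow]; exact Finset.prod_congr rfl fun j _ => hcpowsq j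
    rw [h1, h2]
    congr 1
    calc ∏ j, c j = ∏ j, (2 * (Real.pi:ℂ)) / d j := Finset.prod_congr rfl fun j _ => hcval j
      _ = (2 * (Real.pi:ℂ))^(r:ℕ) / ∏ j, d j := by
          rw [Finset.prod_div_distrib, Finset.prod_const, Finset.card_univ, Fintype.card_fin]
  refine ⟨N / Dden, ?_, ?_, ?_⟩
  · rw [div_pow, hNsq, hDsq, hAdet]
    have h2pi : (2 * (Real.pi:ℂ))^(r:ℕ) ≠ 0 := pow_ne_zero _ (by
      simp [Real.pi_ne_zero])
    field_simp
  · rw [hintval]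
    field_simp
  · intro him
    have hd1 : ∀ j, d j = 1 := by
      intro j
      have h1 : d j = ((P.map ⇑Complex.ofRealHom)ᵀ * A * (P.map ⇑Complex.ofRealHom)) j j := by
        rw [hkey]; simp
      have h2 : (d j).im = 0 := by
        rw [h1]
        simp [Matrix.mul_apply, Finset.sum_mul, Complex.im_sum, Complex.mul_im,
          Matrix.map_apply, him]
      exact Complex.ext (by rw [hdre j]; simp) (by rw [h2]; simp)
    have hcj : ∀ j, c j = 2 * (Real.pi:ℂ) := fun j => by rw [hcval j, hd1 j, div_one]
    have hhalf : ((2 * Real.pi : ℂ))^((1:ℂ)/2) = (((2 * Real.pi)^((1:ℝ)/2) : ℝ) : ℂ) := by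
      rw [Complex.ofReal_cpow (by positivity)]
      push_cast
      ring_nf
    have hprodc : (∏ j, c j ^ (1/2:ℂ)) = N := by
      calc (∏ j, c j ^ (1/2:ℂ)) = ∏ _j : Fin r, ((2 * Real.pi : ℂ))^((1:ℂ)/2) :=
            Finset.prod_congr rfl fun j _ => by rw [hcj j]
        _ = (((2 * Real.pi)^((1:ℝ)/2) : ℝ) : ℂ)^(r:ℕ) := by
            rw [Finset.prod_const, Finset.card_univ, Fintype.card_fin, hhalf]
        _ = N := by
            rw [← Complex.ofReal_pow, hNdef]
            congr 1
            rw [← Real.rpow_natCast ((2 * Real.pi)^((1:ℝ)/2)) r, ← Real.rpow_mul (by positivity)]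
            congr 1
            ring
    have hw : N / Dden = ((|P.det|⁻¹ : ℝ) : ℂ) := by
      rw [hD, hprodc, div_mul_eq_div_div_swap, div_self hNne]
      push_cast
      ring
    rw [hw]
    congr 1
    have hA1 : A.det = (((P.det^2)⁻¹ : ℝ) : ℂ) := by
      rw [hAdet]
      have : (∏ j, d j) = 1 := by
        rw [Finset.prod_congr rfl fun j _ => hd1 j, Finset.prod_const, one_pow]
      rw [this]
      push_cast
      ring
    rw [hA1]
    simp only [Complex.ofReal_re]
    rw [Real.sqrt_inv, Real.sqrt_sq_eq_abs]
end
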